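/- Let y and z be the outputs of Algorithms FeasibleGAP and ImitativeGAP with sample size t = ⌊n/2⌋, where the permutation π of [n] is uniform at random and, conditionally on π, the bin choices R_{t+1},…,R_n are independent with P(R_ℓ = i) = x̃_{i,π(ℓ)}(Q_ℓ) for i ∈ [m] and P(R_ℓ = 0) = 1 − Σ_{i=1}^m x̃_{i,π(ℓ)}(Q_ℓ). Then (1/2)·E[v(y) + v(z)] ≥ ((1 − ln 2)/2) · v(x*), where x* is an optimal integral feasible assignment; hence the algorithm RandomGAP, which runs FeasibleGAP with probability 1/2 and ImitativeGAP with probability 1/2, always outputs a feasible integral assignment of expected value at least ((1 − ln 2)/2) · v(x*) ≈ v(x*)/6.52. -/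

import Mathlib

/-- The value `v(x) = Σ_i Σ_j v_{i,j} x_{i,j}` of an assignment. -/
def gapVal (m n : ℕ) (v : Fin m → Fin n → ℝ) (x : Fin m → Fin n → ℝ) : ℝ :=
  ∑ i, ∑ j, v i j * x i j

/-- `x` is a feasible fractional assignment of the items in `Q`: all entries are
nonnegative, every bin respects its capacity, every item is assigned at most once,
and only items of `Q` are assigned. -/
def gapFeasibleOn (m n : ℕ) (C : Fin m → ℝ) (s : Fin m → Fin n → ℝ)
    (x : Fin m → Fin n → ℝ) (Q : Finset (Fin n)) : Prop :=
  (∀ i j, 0 ≤ x i j) ∧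
  (∀ i, ∑ j, s i j * x i j ≤ C i) ∧
  (∀ j, ∑ i, x i j ≤ 1) ∧
  (∀ i j, j ∉ Q → x i j = 0)

/-- `x` is an integral (0/1) assignment. -/
def gapIntegral (m n : ℕ) (x : Fin m → Fin n → ℝ) : Prop :=
  ∀ i j, x i j = 0 ∨ x i j = 1
/-- `Qset π ℓ` is the set of items revealed in the first `ℓ` rounds
(rounds are 0-indexed `0,…,n−1`). -/
def QsetG (n : ℕ) (π : Equiv.Perm (Fin n)) (ℓ : ℕ) : Finset (Fin n) :=
  (Finset.univ.filter (fun k : Fin n => (k : ℕ) < ℓ)).image π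

/-- Algorithm `InfeasibleGAP`: `infAlg … ℓ` is the assignment after the first `ℓ`
rounds. Nothing is assigned during the sample rounds (0-indexed rounds `< t`); in a
later round `ℓ`, if the bin choice is `R ℓ = some i` and the total size assigned to
bin `i` so far is at most `C i`, item `π ℓ` is assigned to bin `i` (so each bin's
capacity may be exceeded by at most one item). -/
noncomputable def infAlg (m n : ℕ) (C : Fin m → ℝ) (s : Fin m → Fin n → ℝ)
    (t : ℕ) (π : Equiv.Perm (Fin n)) (R : Fin n → Option (Fin m)) :
    ℕ → Fin m → Fin n → ℝ
  | 0 => fun _ _ => 0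
  | (ℓ + 1) =>
      let X := infAlg m n C s t π R ℓ
      if h : t ≤ ℓ ∧ ℓ < n then
        (R ⟨ℓ, h.2⟩).elim X (fun i =>
          if ∑ j, s i j * X i j ≤ C i then
            (fun i' j' => if i' = i ∧ j' = π ⟨ℓ, h.2⟩ then 1 else X i' j')
          else X)
      else X

/-- Algorithms `FeasibleGAP` and `ImitativeGAP`, run together: `fzAlg … ℓ = (y, z)`
after the first `ℓ` rounds. `FeasibleGAP` assigns item `π ℓ` to bin `i = R ℓ` only if
the capacity is respected *after* the assignment; `ImitativeGAP` maintains the same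
imitative assignment `y` and assigns to each bin `i` only the first item whose
tentative assignment to `i` would violate the capacity in `y`. -/
noncomputable def fzAlg (m n : ℕ) (C : Fin m → ℝ) (s : Fin m → Fin n → ℝ)
    (t : ℕ) (π : Equiv.Perm (Fin n)) (R : Fin n → Option (Fin m)) :
    ℕ → ((Fin m → Fin n → ℝ) × (Fin m → Fin n → ℝ))
  | 0 => (fun _ _ => 0, fun _ _ => 0)
  | (ℓ + 1) =>
      let YZ := fzAlg m n C s t π R ℓ
      if h : t ≤ ℓ ∧ ℓ < n then
        (R ⟨ℓ, h.2⟩).elim YZ (fun i =>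
          if s i (π ⟨ℓ, h.2⟩) + ∑ j, s i j * YZ.1 i j ≤ C i then
            ((fun i' j' => if i' = i ∧ j' = π ⟨ℓ, h.2⟩ then 1 else YZ.1 i' j'), YZ.2)
          else if ∀ k ∈ Finset.univ.filter (fun k : Fin n => (k : ℕ) < ℓ),
              YZ.2 i (π k) = 0 then
            (YZ.1, (fun i' j' => if i' = i ∧ j' = π ⟨ℓ, h.2⟩ then 1 else YZ.2 i' j'))
          else YZ)
      else YZ

/-- The probability weight of a vector of bin choices `R` given the permutation `π`:
in each round `ℓ` after the sample (0-indexed `ℓ ≥ t`), independently,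
`P(R ℓ = some i) = x̃_{i,π(ℓ)}(Q_ℓ)` and `P(R ℓ = none) = 1 − Σ_i x̃_{i,π(ℓ)}(Q_ℓ)`;
during the sample rounds the choice is irrelevant and forced to `none`. -/
noncomputable def binWeight (m n : ℕ) (xt : Finset (Fin n) → Fin m → Fin n → ℝ)
    (t : ℕ) (π : Equiv.Perm (Fin n)) (R : Fin n → Option (Fin m)) : ℝ :=
  ∏ ℓ : Fin n,
    if (ℓ : ℕ) < t then (if R ℓ = none then 1 else 0)
    else
      (R ℓ).elim (1 - ∑ i, xt (QsetG n π ((ℓ : ℕ) + 1)) i (π ℓ))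
        (fun i => xt (QsetG n π ((ℓ : ℕ) + 1)) i (π ℓ))


namespace GapAux
open Finset

/-- Tentative total size offered to bin `i` during the first `ℓ` rounds. -/
noncomputable def Tl (m n : ℕ) (s : Fin m → Fin n → ℝ) (π : Equiv.Perm (Fin n))
    (R : Fin n → Option (Fin m)) (ℓ : ℕ) (i : Fin m) : ℝ :=
  ∑ k ∈ Finset.range ℓ,
    if h : k < n then (if R ⟨k, h⟩ = some i then s i (π ⟨k, h⟩) else 0) else 0

/-- Pathwise lower bound for the value gained in round `ℓ`. -/
noncomputable def gain (m n : ℕ) (C : Fin m → ℝ) (s v : Fin m → Fin n → ℝ)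
    (t : ℕ) (π : Equiv.Perm (Fin n)) (R : Fin n → Option (Fin m)) (ℓ : ℕ) : ℝ :=
  if h : t ≤ ℓ ∧ ℓ < n then
    (R ⟨ℓ, h.2⟩).elim 0 (fun i => v i (π ⟨ℓ, h.2⟩) * (1 - Tl m n s π R ℓ i / C i))
  else 0

lemma Tl_nonneg (m n : ℕ) (s : Fin m → Fin n → ℝ) (hs : ∀ i j, 0 ≤ s i j)
    (π : Equiv.Perm (Fin n)) (R : Fin n → Option (Fin m)) (ℓ : ℕ) (i : Fin m) :
    0 ≤ Tl m n s π R ℓ i := by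
  refine Finset.sum_nonneg fun k _ => ?_
  split
  · split <;> simp [hs]
  · exact le_rfl

lemma Tl_succ (m n : ℕ) (s : Fin m → Fin n → ℝ) (π : Equiv.Perm (Fin n))
    (R : Fin n → Option (Fin m)) (ℓ : ℕ) (i : Fin m) :
    Tl m n s π R (ℓ + 1) i = Tl m n s π R ℓ i +
      (if h : ℓ < n then (if R ⟨ℓ, h⟩ = some i then s i (π ⟨ℓ, h⟩) else 0) else 0) := by
  simp [Tl, Finset.sum_range_succ]

lemma Tl_le_succ (m n : ℕ) (s : Fin m → Fin n → ℝ) (hs : ∀ i j, 0 ≤ s i j)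
    (π : Equiv.Perm (Fin n)) (R : Fin n → Option (Fin m)) (ℓ : ℕ) (i : Fin m) :
    Tl m n s π R ℓ i ≤ Tl m n s π R (ℓ + 1) i := by
  rw [Tl_succ]
  have h0 : (0:ℝ) ≤ (if h : ℓ < n then (if R ⟨ℓ, h⟩ = some i then s i (π ⟨ℓ, h⟩) else 0) else 0) := by
    split
    · split <;> simp [hs]
    · exact le_rfl
  linarith

/-- summing a row after a single-entry update -/
lemma sum_row_update (m n : ℕ) (w X : Fin m → Fin n → ℝ) (i : Fin m) (j0 : Fin n) (i'' : Fin m) :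
    (∑ j, w i'' j * (if i'' = i ∧ j = j0 then (1:ℝ) else X i'' j))
      = (∑ j, w i'' j * X i'' j) + (if i'' = i then w i j0 * (1 - X i j0) else 0) := by
  have key : ∀ j, w i'' j * (if i'' = i ∧ j = j0 then (1:ℝ) else X i'' j)
      = w i'' j * X i'' j + (if i'' = i then (if j = j0 then w i j0 * (1 - X i j0) else 0) else 0) := by
    intro j
    by_cases h1 : i'' = i <;> by_cases h2 : j = j0 <;> simp [h1, h2] <;> subst_eqs <;> ring
  rw [Finset.sum_congr rfl (fun j _ => key j), Finset.sum_add_distrib]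
  congr 1
  by_cases h1 : i'' = i
  · simp [h1, Finset.sum_ite_eq']
  · simp [h1]

lemma gapVal_update (m n : ℕ) (v X : Fin m → Fin n → ℝ) (i : Fin m) (j0 : Fin n) :
    gapVal m n v (fun i' j' => if i' = i ∧ j' = j0 then 1 else X i' j')
      = gapVal m n v X + v i j0 * (1 - X i j0) := by
  unfold gapVal
  have key : ∀ i'', (∑ j, v i'' j * (if i'' = i ∧ j = j0 then (1:ℝ) else X i'' j))
      = (∑ j, v i'' j * X i'' j) + (if i'' = i then v i j0 * (1 - X i j0) else 0) :=
    fun i'' => sum_row_update m n v X i j0 i''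
  rw [Finset.sum_congr rfl (fun i'' _ => key i''), Finset.sum_add_distrib]
  simp [Finset.sum_ite_eq']


lemma fz_step_neg (m n : ℕ) (C : Fin m → ℝ) (s : Fin m → Fin n → ℝ) (t : ℕ)
    (π : Equiv.Perm (Fin n)) (R : Fin n → Option (Fin m)) (ℓ : ℕ) (h : ¬(t ≤ ℓ ∧ ℓ < n)) :
    fzAlg m n C s t π R (ℓ + 1) = fzAlg m n C s t π R ℓ := by
  rw [fzAlg]; simp [h]

lemma fz_step_none (m n : ℕ) (C : Fin m → ℝ) (s : Fin m → Fin n → ℝ) (t : ℕ)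
    (π : Equiv.Perm (Fin n)) (R : Fin n → Option (Fin m)) (ℓ : ℕ) (h : t ≤ ℓ ∧ ℓ < n)
    (hR : R ⟨ℓ, h.2⟩ = none) :
    fzAlg m n C s t π R (ℓ + 1) = fzAlg m n C s t π R ℓ := by
  rw [fzAlg]; simp only [dif_pos h]; rw [hR]; rfl

lemma fz_step_fit (m n : ℕ) (C : Fin m → ℝ) (s : Fin m → Fin n → ℝ) (t : ℕ)
    (π : Equiv.Perm (Fin n)) (R : Fin n → Option (Fin m)) (ℓ : ℕ) (h : t ≤ ℓ ∧ ℓ < n)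
    (i0 : Fin m) (hR : R ⟨ℓ, h.2⟩ = some i0)
    (hfit : s i0 (π ⟨ℓ, h.2⟩) + ∑ j, s i0 j * (fzAlg m n C s t π R ℓ).1 i0 j ≤ C i0) :
    fzAlg m n C s t π R (ℓ + 1) =
      ((fun i' j' => if i' = i0 ∧ j' = π ⟨ℓ, h.2⟩ then 1 else (fzAlg m n C s t π R ℓ).1 i' j'),
        (fzAlg m n C s t π R ℓ).2) := by
  rw [fzAlg]; simp only [dif_pos h]; rw [hR]; simp only [Option.elim]; rw [if_pos hfit]

lemma fz_step_free (m n : ℕ) (C : Fin m → ℝ) (s : Fin m → Fin n → ℝ) (t : ℕ)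
    (π : Equiv.Perm (Fin n)) (R : Fin n → Option (Fin m)) (ℓ : ℕ) (h : t ≤ ℓ ∧ ℓ < n)
    (i0 : Fin m) (hR : R ⟨ℓ, h.2⟩ = some i0)
    (hnf : ¬ (s i0 (π ⟨ℓ, h.2⟩) + ∑ j, s i0 j * (fzAlg m n C s t π R ℓ).1 i0 j ≤ C i0))
    (hfree : ∀ k ∈ Finset.univ.filter (fun k : Fin n => (k : ℕ) < ℓ),
      (fzAlg m n C s t π R ℓ).2 i0 (π k) = 0) :
    fzAlg m n C s t π R (ℓ + 1) =
      ((fzAlg m n C s t π R ℓ).1,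
        (fun i' j' => if i' = i0 ∧ j' = π ⟨ℓ, h.2⟩ then 1 else (fzAlg m n C s t π R ℓ).2 i' j')) := by
  rw [fzAlg]; simp only [dif_pos h]; rw [hR]; simp only [Option.elim]
  rw [if_neg hnf, if_pos hfree]

lemma fz_step_block (m n : ℕ) (C : Fin m → ℝ) (s : Fin m → Fin n → ℝ) (t : ℕ)
    (π : Equiv.Perm (Fin n)) (R : Fin n → Option (Fin m)) (ℓ : ℕ) (h : t ≤ ℓ ∧ ℓ < n)
    (i0 : Fin m) (hR : R ⟨ℓ, h.2⟩ = some i0)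
    (hnf : ¬ (s i0 (π ⟨ℓ, h.2⟩) + ∑ j, s i0 j * (fzAlg m n C s t π R ℓ).1 i0 j ≤ C i0))
    (hnfree : ¬ ∀ k ∈ Finset.univ.filter (fun k : Fin n => (k : ℕ) < ℓ),
      (fzAlg m n C s t π R ℓ).2 i0 (π k) = 0) :
    fzAlg m n C s t π R (ℓ + 1) = fzAlg m n C s t π R ℓ := by
  rw [fzAlg]; simp only [dif_pos h]; rw [hR]; simp only [Option.elim]
  rw [if_neg hnf, if_neg hnfree]

lemma gain_pos_eq (m n : ℕ) (C : Fin m → ℝ) (s v : Fin m → Fin n → ℝ) (t : ℕ)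
    (π : Equiv.Perm (Fin n)) (R : Fin n → Option (Fin m)) (ℓ : ℕ) (h : t ≤ ℓ ∧ ℓ < n)
    (i0 : Fin m) (hR : R ⟨ℓ, h.2⟩ = some i0) :
    gain m n C s v t π R ℓ
      = v i0 (π ⟨ℓ, h.2⟩) * (1 - Tl m n s π R ℓ i0 / C i0) := by
  unfold gain; rw [dif_pos h, hR]; rfl

lemma gain_none_eq (m n : ℕ) (C : Fin m → ℝ) (s v : Fin m → Fin n → ℝ) (t : ℕ)
    (π : Equiv.Perm (Fin n)) (R : Fin n → Option (Fin m)) (ℓ : ℕ) (h : t ≤ ℓ ∧ ℓ < n)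
    (hR : R ⟨ℓ, h.2⟩ = none) : gain m n C s v t π R ℓ = 0 := by
  unfold gain; rw [dif_pos h, hR]; rfl

lemma fz_inv (m n : ℕ) (C : Fin m → ℝ) (s v : Fin m → Fin n → ℝ)
    (hC : ∀ i, 0 < C i) (hs : ∀ i j, 0 < s i j ∧ s i j ≤ C i) (hv : ∀ i j, 0 < v i j)
    (t : ℕ) (π : Equiv.Perm (Fin n)) (R : Fin n → Option (Fin m)) (ℓ : ℕ) :
    (∀ i j, (fzAlg m n C s t π R ℓ).1 i j = 0 ∨ (fzAlg m n C s t π R ℓ).1 i j = 1) ∧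
    (∀ i j, (fzAlg m n C s t π R ℓ).2 i j = 0 ∨ (fzAlg m n C s t π R ℓ).2 i j = 1) ∧
    (∀ i j, (fzAlg m n C s t π R ℓ).1 i j ≠ 0 →
      ((π.symm j : ℕ) < ℓ ∧ t ≤ (π.symm j : ℕ) ∧ R (π.symm j) = some i)) ∧
    (∀ i j, (fzAlg m n C s t π R ℓ).2 i j ≠ 0 →
      ((π.symm j : ℕ) < ℓ ∧ t ≤ (π.symm j : ℕ) ∧ R (π.symm j) = some i)) ∧
    (∀ i, ∑ j, s i j * (fzAlg m n C s t π R ℓ).1 i j ≤ C i) ∧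
    (∀ i, ∑ j, s i j * (fzAlg m n C s t π R ℓ).1 i j ≤ Tl m n s π R ℓ i) ∧
    (∀ i j, (fzAlg m n C s t π R ℓ).2 i j ≠ 0 → C i < Tl m n s π R ℓ i) ∧
    (∀ i j j', (fzAlg m n C s t π R ℓ).2 i j ≠ 0 → (fzAlg m n C s t π R ℓ).2 i j' ≠ 0 → j = j') ∧
    (∑ k ∈ Finset.range ℓ, gain m n C s v t π R k
       ≤ gapVal m n v (fzAlg m n C s t π R ℓ).1 + gapVal m n v (fzAlg m n C s t π R ℓ).2) := by
  have hs0 : ∀ i j, 0 ≤ s i j := fun i j => le_of_lt (hs i j).1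
  induction ℓ with
  | zero =>
      refine ⟨fun i j => Or.inl rfl, fun i j => Or.inl rfl, fun i j h => absurd rfl h,
        fun i j h => absurd rfl h, fun i => ?_, fun i => ?_, fun i j h => absurd rfl h,
        fun i j j' h => absurd rfl h, ?_⟩
      · simp [fzAlg]; exact le_of_lt (hC i)
      · simp [fzAlg, Tl]
      · simp [fzAlg, gapVal]
  | succ ℓ IH =>
      obtain ⟨iY01, iZ01, iYprov, iZprov, iYcap, iYT, iZT, iZuniq, iVal⟩ := IH
      have Tmono := Tl_le_succ m n s hs0 π R ℓ
      by_cases h : t ≤ ℓ ∧ ℓ < n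
      · cases hR : R ⟨ℓ, h.2⟩ with
        | none =>
            have hstep := fz_step_none m n C s t π R ℓ h hR
            have hgain : gain m n C s v t π R ℓ = 0 := gain_none_eq m n C s v t π R ℓ h hR
            rw [hstep]
            exact ⟨iY01, iZ01,
              fun i j hne => ⟨Nat.lt_succ_of_lt (iYprov i j hne).1, (iYprov i j hne).2⟩,
              fun i j hne => ⟨Nat.lt_succ_of_lt (iZprov i j hne).1, (iZprov i j hne).2⟩,
              iYcap, fun i => le_trans (iYT i) (Tmono i),
              fun i j hne => lt_of_lt_of_le (iZT i j hne) (Tmono i), iZuniq, by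
                rw [Finset.sum_range_succ, hgain, add_zero]; exact iVal⟩
        | some i0 =>
            have hπe : π.symm (π ⟨ℓ, h.2⟩) = ⟨ℓ, h.2⟩ := Equiv.symm_apply_apply π _
            have hY0 : (fzAlg m n C s t π R ℓ).1 i0 (π ⟨ℓ, h.2⟩) = 0 := by
              by_contra hne
              have := (iYprov i0 (π ⟨ℓ, h.2⟩) hne).1
              rw [hπe] at this; exact absurd this (lt_irrefl ℓ)
            have hZ0 : (fzAlg m n C s t π R ℓ).2 i0 (π ⟨ℓ, h.2⟩) = 0 := by
              by_contra hne
              have := (iZprov i0 (π ⟨ℓ, h.2⟩) hne).1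
              rw [hπe] at this; exact absurd this (lt_irrefl ℓ)
            have hTinc : Tl m n s π R (ℓ + 1) i0 = Tl m n s π R ℓ i0 + s i0 (π ⟨ℓ, h.2⟩) := by
              rw [Tl_succ, dif_pos h.2, if_pos hR]
            have hgain : gain m n C s v t π R ℓ
                = v i0 (π ⟨ℓ, h.2⟩) * (1 - Tl m n s π R ℓ i0 / C i0) :=
              gain_pos_eq m n C s v t π R ℓ h i0 hR
            have hgle : gain m n C s v t π R ℓ ≤ v i0 (π ⟨ℓ, h.2⟩) := by
              rw [hgain]
              have h1 : 0 ≤ Tl m n s π R ℓ i0 / C i0 :=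
                div_nonneg (Tl_nonneg m n s hs0 π R ℓ i0) (le_of_lt (hC i0))
              nlinarith [hv i0 (π ⟨ℓ, h.2⟩)]
            by_cases hfit : s i0 (π ⟨ℓ, h.2⟩) + ∑ j, s i0 j * (fzAlg m n C s t π R ℓ).1 i0 j ≤ C i0
            · have hstep := fz_step_fit m n C s t π R ℓ h i0 hR hfit
              rw [hstep]
              refine ⟨?_, iZ01, ?_, fun i j hne =>
                ⟨Nat.lt_succ_of_lt (iZprov i j hne).1, (iZprov i j hne).2⟩, ?_, ?_,
                fun i j hne => lt_of_lt_of_le (iZT i j hne) (Tmono i), iZuniq, ?_⟩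
              · intro i j; dsimp only; split
                · exact Or.inr rfl
                · exact iY01 i j
              · intro i j hne; dsimp only at hne
                by_cases hc : i = i0 ∧ j = π ⟨ℓ, h.2⟩
                · obtain ⟨hc1, hc2⟩ := hc; subst hc1; subst hc2
                  rw [hπe]
                  exact ⟨Nat.lt_succ_self ℓ, h.1, hR⟩
                · rw [if_neg hc] at hne
                  exact ⟨Nat.lt_succ_of_lt (iYprov i j hne).1, (iYprov i j hne).2⟩
              · intro i; dsimp only
                rw [sum_row_update m n s (fzAlg m n C s t π R ℓ).1 i0 (π ⟨ℓ, h.2⟩) i]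
                by_cases hi : i = i0
                · subst hi; rw [if_pos rfl, hY0]
                  calc (∑ j, s i j * (fzAlg m n C s t π R ℓ).1 i j) + s i (π ⟨ℓ, h.2⟩) * (1 - 0)
                      = s i (π ⟨ℓ, h.2⟩) + ∑ j, s i j * (fzAlg m n C s t π R ℓ).1 i j := by ring
                    _ ≤ C i := hfit
                · rw [if_neg hi, add_zero]; exact iYcap i
              · intro i; dsimp only
                rw [sum_row_update m n s (fzAlg m n C s t π R ℓ).1 i0 (π ⟨ℓ, h.2⟩) i]
                by_cases hi : i = i0
                · subst hi; rw [if_pos rfl, hY0, hTinc]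
                  have := iYT i; nlinarith [hs i (π ⟨ℓ, h.2⟩)]
                · rw [if_neg hi, add_zero]; exact le_trans (iYT i) (Tmono i)
              · rw [Finset.sum_range_succ]; dsimp only
                rw [gapVal_update m n v (fzAlg m n C s t π R ℓ).1 i0 (π ⟨ℓ, h.2⟩), hY0]
                have : gain m n C s v t π R ℓ ≤ v i0 (π ⟨ℓ, h.2⟩) * (1 - 0) := by
                  rw [mul_one_sub, mul_zero, sub_zero]; exact hgle
                linarith [iVal]
            · by_cases hfree : ∀ k ∈ Finset.univ.filter (fun k : Fin n => (k : ℕ) < ℓ),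
                  (fzAlg m n C s t π R ℓ).2 i0 (π k) = 0
              · have hstep := fz_step_free m n C s t π R ℓ h i0 hR hfit hfree
                rw [hstep]
                have hCT : C i0 < Tl m n s π R (ℓ + 1) i0 := by
                  rw [hTinc]
                  push_neg at hfit
                  have := iYT i0
                  linarith
                refine ⟨iY01, ?_, fun i j hne =>
                  ⟨Nat.lt_succ_of_lt (iYprov i j hne).1, (iYprov i j hne).2⟩, ?_,
                  iYcap, fun i => le_trans (iYT i) (Tmono i), ?_, ?_, ?_⟩
                · intro i j; dsimp only; split
                  · exact Or.inr rfl
                  · exact iZ01 i j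
                · intro i j hne; dsimp only at hne
                  by_cases hc : i = i0 ∧ j = π ⟨ℓ, h.2⟩
                  · obtain ⟨hc1, hc2⟩ := hc; subst hc1; subst hc2
                    rw [hπe]
                    exact ⟨Nat.lt_succ_self ℓ, h.1, hR⟩
                  · rw [if_neg hc] at hne
                    exact ⟨Nat.lt_succ_of_lt (iZprov i j hne).1, (iZprov i j hne).2⟩
                · intro i j hne; dsimp only at hne
                  by_cases hc : i = i0 ∧ j = π ⟨ℓ, h.2⟩
                  · exact hc.1 ▸ hCT
                  · rw [if_neg hc] at hne
                    exact lt_of_lt_of_le (iZT i j hne) (Tmono i)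
                · intro i j j' hne hne'; dsimp only at hne hne'
                  by_cases hc : i = i0 ∧ j = π ⟨ℓ, h.2⟩
                  · by_cases hc' : i = i0 ∧ j' = π ⟨ℓ, h.2⟩
                    · rw [hc.2, hc'.2]
                    · rw [if_neg hc'] at hne'
                      obtain ⟨hb, _, _⟩ := iZprov i j' hne'
                      exfalso
                      have hmem : π.symm j' ∈ Finset.univ.filter (fun k : Fin n => (k : ℕ) < ℓ) := by
                        simp [hb]
                      have := hfree (π.symm j') hmem
                      rw [Equiv.apply_symm_apply, ← hc.1] at this
                      exact hne' this
                  · rw [if_neg hc] at hne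
                    by_cases hc' : i = i0 ∧ j' = π ⟨ℓ, h.2⟩
                    · obtain ⟨hb, _, _⟩ := iZprov i j hne
                      exfalso
                      have hmem : π.symm j ∈ Finset.univ.filter (fun k : Fin n => (k : ℕ) < ℓ) := by
                        simp [hb]
                      have := hfree (π.symm j) hmem
                      rw [Equiv.apply_symm_apply, ← hc'.1] at this
                      exact hne this
                    · rw [if_neg hc'] at hne'
                      exact iZuniq i j j' hne hne'
                · rw [Finset.sum_range_succ]; dsimp only
                  rw [gapVal_update m n v (fzAlg m n C s t π R ℓ).2 i0 (π ⟨ℓ, h.2⟩), hZ0]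
                  have : gain m n C s v t π R ℓ ≤ v i0 (π ⟨ℓ, h.2⟩) * (1 - 0) := by
                    rw [mul_one_sub, mul_zero, sub_zero]; exact hgle
                  linarith [iVal]
              · have hstep := fz_step_block m n C s t π R ℓ h i0 hR hfit hfree
                rw [hstep]
                have hgle0 : gain m n C s v t π R ℓ ≤ 0 := by
                  push_neg at hfree
                  obtain ⟨k, hkmem, hkne⟩ := hfree
                  have hCT : C i0 < Tl m n s π R ℓ i0 := iZT i0 (π k) hkne
                  rw [hgain]
                  have h1 : 1 ≤ Tl m n s π R ℓ i0 / C i0 :=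
                    (one_le_div (hC i0)).mpr (le_of_lt hCT)
                  nlinarith [hv i0 (π ⟨ℓ, h.2⟩)]
                exact ⟨iY01, iZ01,
                  fun i j hne => ⟨Nat.lt_succ_of_lt (iYprov i j hne).1, (iYprov i j hne).2⟩,
                  fun i j hne => ⟨Nat.lt_succ_of_lt (iZprov i j hne).1, (iZprov i j hne).2⟩,
                  iYcap, fun i => le_trans (iYT i) (Tmono i),
                  fun i j hne => lt_of_lt_of_le (iZT i j hne) (Tmono i), iZuniq, by
                    rw [Finset.sum_range_succ]; linarith [iVal]⟩
      · have hstep := fz_step_neg m n C s t π R ℓ h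
        have hgain : gain m n C s v t π R ℓ = 0 := by unfold gain; rw [dif_neg h]
        rw [hstep]
        exact ⟨iY01, iZ01,
          fun i j hne => ⟨Nat.lt_succ_of_lt (iYprov i j hne).1, (iYprov i j hne).2⟩,
          fun i j hne => ⟨Nat.lt_succ_of_lt (iZprov i j hne).1, (iZprov i j hne).2⟩,
          iYcap, fun i => le_trans (iYT i) (Tmono i),
          fun i j hne => lt_of_lt_of_le (iZT i j hne) (Tmono i), iZuniq, by
            rw [Finset.sum_range_succ, hgain, add_zero]; exact iVal⟩

lemma sum01_le_one {M : ℕ} (e : Fin M → ℝ) (h01 : ∀ i, e i = 0 ∨ e i = 1)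
    (huniq : ∀ i i', e i ≠ 0 → e i' ≠ 0 → i = i') : ∑ i, e i ≤ 1 := by
  by_cases hex : ∃ i, e i ≠ 0
  · obtain ⟨i0, hi0⟩ := hex
    have : ∑ i, e i = e i0 := by
      apply Finset.sum_eq_single
      · intro i _ hne
        by_contra hne0
        exact hne (huniq i i0 hne0 hi0)
      · intro habs; exact absurd (Finset.mem_univ i0) habs
    rw [this]
    rcases h01 i0 with h | h <;> rw [h] <;> norm_num
  · push_neg at hex
    simp [hex]

lemma sum_wt_le {M : ℕ} (w e : Fin M → ℝ) (c : ℝ) (hc : 0 ≤ c)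
    (hw : ∀ i, w i ≤ c) (h01 : ∀ i, e i = 0 ∨ e i = 1)
    (huniq : ∀ i i', e i ≠ 0 → e i' ≠ 0 → i = i') : ∑ i, w i * e i ≤ c := by
  by_cases hex : ∃ i, e i ≠ 0
  · obtain ⟨i0, hi0⟩ := hex
    have : ∑ i, w i * e i = w i0 * e i0 := by
      apply Finset.sum_eq_single
      · intro i _ hne
        by_contra hne0
        have he : e i ≠ 0 := fun h0 => hne0 (by rw [h0, mul_zero])
        exact hne (huniq i i0 he hi0)
      · intro habs; exact absurd (Finset.mem_univ i0) habs
    rw [this]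
    rcases h01 i0 with h | h
    · rw [h, mul_zero]; exact hc
    · rw [h, mul_one]; exact hw i0
  · push_neg at hex
    simp [hex, hc]

lemma fz_final (m n : ℕ) (C : Fin m → ℝ) (s v : Fin m → Fin n → ℝ)
    (hC : ∀ i, 0 < C i) (hs : ∀ i j, 0 < s i j ∧ s i j ≤ C i) (hv : ∀ i j, 0 < v i j)
    (t : ℕ) (π : Equiv.Perm (Fin n)) (R : Fin n → Option (Fin m)) (ℓ : ℕ) :
    gapFeasibleOn m n C s ((fzAlg m n C s t π R ℓ).1) Finset.univ ∧
    gapIntegral m n ((fzAlg m n C s t π R ℓ).1) ∧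
    gapFeasibleOn m n C s ((fzAlg m n C s t π R ℓ).2) Finset.univ ∧
    gapIntegral m n ((fzAlg m n C s t π R ℓ).2) := by
  obtain ⟨iY01, iZ01, iYprov, iZprov, iYcap, iYT, iZT, iZuniq, iVal⟩ :=
    fz_inv m n C s v hC hs hv t π R ℓ
  have nonneg01 : ∀ (x : ℝ), (x = 0 ∨ x = 1) → 0 ≤ x := by rintro x (rfl | rfl) <;> norm_num
  refine ⟨⟨fun i j => nonneg01 _ (iY01 i j), iYcap, fun j => ?_, fun i j hj => absurd (Finset.mem_univ j) hj⟩,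
    fun i j => iY01 i j,
    ⟨fun i j => nonneg01 _ (iZ01 i j), fun i => ?_, fun j => ?_, fun i j hj => absurd (Finset.mem_univ j) hj⟩,
    fun i j => iZ01 i j⟩
  · -- each item at most once in y
    apply sum01_le_one _ (fun i => iY01 i j)
    intro i i' hne hne'
    have h1 := (iYprov i j hne).2.2
    have h2 := (iYprov i' j hne').2.2
    rw [h1] at h2; exact Option.some.inj h2
  · -- z capacity
    apply sum_wt_le (fun j => s i j) (fun j => (fzAlg m n C s t π R ℓ).2 i j) (C i)
      (le_of_lt (hC i)) (fun j => (hs i j).2) (fun j => iZ01 i j)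
    intro j j' hne hne'
    exact iZuniq i j j' hne hne'
  · -- each item at most once in z
    apply sum01_le_one _ (fun i => iZ01 i j)
    intro i i' hne hne'
    have h1 := (iZprov i j hne).2.2
    have h2 := (iZprov i' j hne').2.2
    rw [h1] at h2; exact Option.some.inj h2

noncomputable def wgt (m n : ℕ) (xt : Finset (Fin n) → Fin m → Fin n → ℝ) (t : ℕ)
    (π : Equiv.Perm (Fin n)) (c : Fin n) (o : Option (Fin m)) : ℝ :=
  if (c : ℕ) < t then (if o = none then 1 else 0)
  else o.elim (1 - ∑ i, xt (QsetG n π ((c : ℕ) + 1)) i (π c))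
        (fun i => xt (QsetG n π ((c : ℕ) + 1)) i (π c))

lemma binWeight_eq_prod (m n : ℕ) (xt : Finset (Fin n) → Fin m → Fin n → ℝ) (t : ℕ)
    (π : Equiv.Perm (Fin n)) (R : Fin n → Option (Fin m)) :
    binWeight m n xt t π R = ∏ c, wgt m n xt t π c (R c) := rfl

lemma wgt_sum_eq_one (m n : ℕ) (xt : Finset (Fin n) → Fin m → Fin n → ℝ) (t : ℕ)
    (π : Equiv.Perm (Fin n)) (c : Fin n) :
    ∑ o : Option (Fin m), wgt m n xt t π c o = 1 := by
  rw [Fintype.sum_option]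
  unfold wgt
  by_cases hc : (c : ℕ) < t
  · simp [hc]
  · simp only [if_neg hc, Option.elim]
    ring

lemma wgt_nonneg (m n : ℕ) (xt : Finset (Fin n) → Fin m → Fin n → ℝ) (t : ℕ)
    (π : Equiv.Perm (Fin n)) (c : Fin n) (o : Option (Fin m))
    (hx0 : ∀ Q i j, 0 ≤ xt Q i j) (hx1 : ∀ Q j, ∑ i, xt Q i j ≤ 1) :
    0 ≤ wgt m n xt t π c o := by
  unfold wgt
  by_cases hc : (c : ℕ) < t
  · rw [if_pos hc]; split <;> norm_num
  · rw [if_neg hc]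
    cases o with
    | none => simp only [Option.elim]; linarith [hx1 (QsetG n π ((c : ℕ) + 1)) (π c)]
    | some i => simpa using hx0 (QsetG n π ((c : ℕ) + 1)) i (π c)

lemma binWeight_nonneg (m n : ℕ) (xt : Finset (Fin n) → Fin m → Fin n → ℝ) (t : ℕ)
    (π : Equiv.Perm (Fin n)) (R : Fin n → Option (Fin m))
    (hx0 : ∀ Q i j, 0 ≤ xt Q i j) (hx1 : ∀ Q j, ∑ i, xt Q i j ≤ 1) :
    0 ≤ binWeight m n xt t π R := by
  rw [binWeight_eq_prod]
  exact Finset.prod_nonneg fun c _ => wgt_nonneg m n xt t π c (R c) hx0 hx1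

lemma sum_pi (m n : ℕ) (F : Fin n → Option (Fin m) → ℝ) :
    ∑ R : Fin n → Option (Fin m), ∏ c, F c (R c) = ∏ c, ∑ o, F c o := by
  rw [Finset.prod_univ_sum, Fintype.piFinset_univ]

lemma exp_two (m n : ℕ) (xt : Finset (Fin n) → Fin m → Fin n → ℝ) (t : ℕ)
    (π : Equiv.Perm (Fin n)) (a b : Fin n) (hab : a ≠ b) (f g : Option (Fin m) → ℝ) :
    ∑ R : Fin n → Option (Fin m), (∏ c, wgt m n xt t π c (R c)) * f (R a) * g (R b)
      = (∑ o, wgt m n xt t π a o * f o) * (∑ o, wgt m n xt t π b o * g o) := by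
  have key : ∀ R : Fin n → Option (Fin m),
      (∏ c, wgt m n xt t π c (R c)) * f (R a) * g (R b)
        = ∏ c, (wgt m n xt t π c (R c) *
            ((if c = a then f (R c) else 1) * (if c = b then g (R c) else 1))) := by
    intro R
    rw [Finset.prod_mul_distrib, Finset.prod_mul_distrib,
      Finset.prod_ite_eq' Finset.univ a (fun c => f (R c)),
      Finset.prod_ite_eq' Finset.univ b (fun c => g (R c))]
    simp only [Finset.mem_univ, if_true]
    ring
  rw [Finset.sum_congr rfl (fun R _ => key R),
    sum_pi m n (fun c o => wgt m n xt t π c o * ((if c = a then f o else 1) * (if c = b then g o else 1)))]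
  have hval : ∀ c : Fin n,
      (∑ o, wgt m n xt t π c o * ((if c = a then f o else 1) * (if c = b then g o else 1)))
        = (if c = a then (∑ o, wgt m n xt t π a o * f o) else 1) *
          (if c = b then (∑ o, wgt m n xt t π b o * g o) else 1) := by
    intro c
    by_cases h1 : c = a
    · subst h1
      simp [hab]
    · by_cases h2 : c = b
      · subst h2
        simp [h1]
      · have : (∑ o, wgt m n xt t π c o * ((if c = a then f o else 1) * (if c = b then g o else 1)))
            = ∑ o, wgt m n xt t π c o :=
          Finset.sum_congr rfl fun o _ => by rw [if_neg h1, if_neg h2, mul_one, mul_one]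
        rw [this, wgt_sum_eq_one, if_neg h1, if_neg h2, mul_one]
  rw [Finset.prod_congr rfl (fun c _ => hval c), Finset.prod_mul_distrib,
    Finset.prod_ite_eq' Finset.univ a, Finset.prod_ite_eq' Finset.univ b]
  simp only [Finset.mem_univ, if_true]

lemma exp_one (m n : ℕ) (xt : Finset (Fin n) → Fin m → Fin n → ℝ) (t : ℕ)
    (π : Equiv.Perm (Fin n)) (a : Fin n) (f : Option (Fin m) → ℝ) :
    ∑ R : Fin n → Option (Fin m), (∏ c, wgt m n xt t π c (R c)) * f (R a)
      = (∑ o, wgt m n xt t π a o * f o) := by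
  have key : ∀ R : Fin n → Option (Fin m),
      (∏ c, wgt m n xt t π c (R c)) * f (R a)
        = ∏ c, (wgt m n xt t π c (R c) * (if c = a then f (R c) else 1)) := by
    intro R
    rw [Finset.prod_mul_distrib, Finset.prod_ite_eq' Finset.univ a (fun c => f (R c))]
    simp only [Finset.mem_univ, if_true]
  rw [Finset.sum_congr rfl (fun R _ => key R),
    sum_pi m n (fun c o => wgt m n xt t π c o * (if c = a then f o else 1))]
  have hval : ∀ c : Fin n,
      (∑ o, wgt m n xt t π c o * (if c = a then f o else 1))
        = (if c = a then (∑ o, wgt m n xt t π a o * f o) else 1) := by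
    intro c
    by_cases h1 : c = a
    · subst h1
      simp
    · have : (∑ o, wgt m n xt t π c o * (if c = a then f o else 1))
          = ∑ o, wgt m n xt t π c o :=
        Finset.sum_congr rfl fun o _ => by rw [if_neg h1, mul_one]
      rw [this, wgt_sum_eq_one, if_neg h1]
  rw [Finset.prod_congr rfl (fun c _ => hval c), Finset.prod_ite_eq' Finset.univ a]
  simp only [Finset.mem_univ, if_true]

noncomputable def pc (m n : ℕ) (xt : Finset (Fin n) → Fin m → Fin n → ℝ) (t : ℕ)
    (π : Equiv.Perm (Fin n)) (k : ℕ) (i : Fin m) : ℝ :=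
  if h : k < n ∧ t ≤ k then xt (QsetG n π (k + 1)) i (π ⟨k, h.1⟩) else 0

noncomputable def qs (m n : ℕ) (xt : Finset (Fin n) → Fin m → Fin n → ℝ)
    (s : Fin m → Fin n → ℝ) (t : ℕ) (π : Equiv.Perm (Fin n)) (i : Fin m) (k : ℕ) : ℝ :=
  if h : k < n ∧ t ≤ k then
    xt (QsetG n π (k + 1)) i (π ⟨k, h.1⟩) * s i (π ⟨k, h.1⟩) else 0

lemma qs_pc (m n : ℕ) (xt : Finset (Fin n) → Fin m → Fin n → ℝ) (s : Fin m → Fin n → ℝ)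
    (t : ℕ) (π : Equiv.Perm (Fin n)) (i : Fin m) (k : ℕ) (hk : k < n) :
    qs m n xt s t π i k = pc m n xt t π k i * s i (π ⟨k, hk⟩) := by
  unfold qs pc
  by_cases ht : t ≤ k
  · rw [dif_pos ⟨hk, ht⟩, dif_pos ⟨hk, ht⟩]
  · rw [dif_neg (fun hh => ht hh.2), dif_neg (fun hh => ht hh.2), zero_mul]

lemma marg (m n : ℕ) (xt : Finset (Fin n) → Fin m → Fin n → ℝ) (t : ℕ)
    (π : Equiv.Perm (Fin n)) (a : Fin n) (i : Fin m) :
    (∑ o : Option (Fin m), wgt m n xt t π a o * (if o = some i then (1:ℝ) else 0))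
      = pc m n xt t π (a : ℕ) i := by
  rw [Fintype.sum_option]
  have h1 : ∀ i' : Fin m,
      wgt m n xt t π a (some i') * (if (some i' : Option (Fin m)) = some i then (1:ℝ) else 0)
        = if i' = i then wgt m n xt t π a (some i') else 0 := by
    intro i'; by_cases hii : i' = i <;> simp [hii]
  rw [Finset.sum_congr rfl (fun i' _ => h1 i'), Finset.sum_ite_eq' Finset.univ i]
  simp only [Finset.mem_univ, if_true, reduceCtorEq, if_false, mul_zero, zero_add]
  unfold wgt pc
  by_cases hc : (a : ℕ) < t
  · rw [if_pos hc, dif_neg (fun hh => absurd hc (not_lt.mpr hh.2))]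
    simp
  · rw [if_neg hc, dif_pos ⟨a.isLt, not_lt.mp hc⟩]
    simp only [Option.elim, Fin.eta]

lemma cor1 (m n : ℕ) (xt : Finset (Fin n) → Fin m → Fin n → ℝ) (t : ℕ)
    (π : Equiv.Perm (Fin n)) (a : Fin n) (i : Fin m) (c : ℝ) :
    ∑ R : Fin n → Option (Fin m),
        (if R a = some i then binWeight m n xt t π R * c else 0)
      = pc m n xt t π (a : ℕ) i * c := by
  have key : ∀ R : Fin n → Option (Fin m),
      (if R a = some i then binWeight m n xt t π R * c else 0)
        = (∏ x, wgt m n xt t π x (R x)) * ((fun o => (if o = some i then (1:ℝ) else 0) * c) (R a)) := by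
    intro R
    rw [binWeight_eq_prod]
    by_cases hR : R a = some i <;> simp [hR] <;> ring
  rw [Finset.sum_congr rfl (fun R _ => key R),
    exp_one m n xt t π a (fun o => (if o = some i then (1:ℝ) else 0) * c)]
  have : ∀ o : Option (Fin m), wgt m n xt t π a o * ((if o = some i then (1:ℝ) else 0) * c)
      = (wgt m n xt t π a o * (if o = some i then (1:ℝ) else 0)) * c := fun o => by ring
  rw [Finset.sum_congr rfl (fun o _ => this o), ← Finset.sum_mul, marg]

lemma cor2 (m n : ℕ) (xt : Finset (Fin n) → Fin m → Fin n → ℝ) (t : ℕ)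
    (π : Equiv.Perm (Fin n)) (a b : Fin n) (hab : a ≠ b) (i : Fin m) (c : ℝ) :
    ∑ R : Fin n → Option (Fin m),
        (if R a = some i then (if R b = some i then binWeight m n xt t π R * c else 0) else 0)
      = pc m n xt t π (a : ℕ) i * (pc m n xt t π (b : ℕ) i * c) := by
  have key : ∀ R : Fin n → Option (Fin m),
      (if R a = some i then (if R b = some i then binWeight m n xt t π R * c else 0) else 0)
        = (∏ x, wgt m n xt t π x (R x)) * ((fun o => if o = some i then (1:ℝ) else 0) (R a))
            * ((fun o => (if o = some i then (1:ℝ) else 0) * c) (R b)) := by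
    intro R
    rw [binWeight_eq_prod]
    by_cases hRa : R a = some i <;> by_cases hRb : R b = some i <;> simp [hRa, hRb] <;> ring
  rw [Finset.sum_congr rfl (fun R _ => key R),
    exp_two m n xt t π a b hab (fun o => if o = some i then (1:ℝ) else 0)
      (fun o => (if o = some i then (1:ℝ) else 0) * c), marg]
  congr 1
  have : ∀ o : Option (Fin m), wgt m n xt t π b o * ((if o = some i then (1:ℝ) else 0) * c)
      = (wgt m n xt t π b o * (if o = some i then (1:ℝ) else 0)) * c := fun o => by ring
  rw [Finset.sum_congr rfl (fun o _ => this o), ← Finset.sum_mul, marg]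

lemma gain_expand (m n : ℕ) (C : Fin m → ℝ) (s v : Fin m → Fin n → ℝ) (t : ℕ)
    (π : Equiv.Perm (Fin n)) (R : Fin n → Option (Fin m)) (ℓ : ℕ) (h : t ≤ ℓ ∧ ℓ < n) :
    gain m n C s v t π R ℓ = ∑ i, (if R ⟨ℓ, h.2⟩ = some i then
      v i (π ⟨ℓ, h.2⟩) * (1 - Tl m n s π R ℓ i / C i) else 0) := by
  unfold gain; rw [dif_pos h]
  cases hR : R ⟨ℓ, h.2⟩ with
  | none => simp
  | some i0 =>
      simp only [Option.elim]
      have : ∀ i : Fin m, (if (some i0 : Option (Fin m)) = some i then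
          v i (π ⟨ℓ, h.2⟩) * (1 - Tl m n s π R ℓ i / C i) else 0)
          = (if i = i0 then v i (π ⟨ℓ, h.2⟩) * (1 - Tl m n s π R ℓ i / C i) else 0) := by
        intro i; by_cases hi : i = i0
        · simp [hi]
        · rw [if_neg hi, if_neg (fun hh => hi (Option.some.inj hh).symm)]
      rw [Finset.sum_congr rfl (fun i _ => this i), Finset.sum_ite_eq' Finset.univ i0]
      simp

lemma exp_gain (m n : ℕ) (C : Fin m → ℝ) (s v : Fin m → Fin n → ℝ)
    (xt : Finset (Fin n) → Fin m → Fin n → ℝ) (t : ℕ)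
    (π : Equiv.Perm (Fin n)) (ℓ : ℕ) (h : t ≤ ℓ ∧ ℓ < n) :
    ∑ R : Fin n → Option (Fin m), binWeight m n xt t π R * gain m n C s v t π R ℓ
      = (∑ i, pc m n xt t π ℓ i * v i (π ⟨ℓ, h.2⟩))
        - ∑ k ∈ Finset.range ℓ, ∑ i, (v i (π ⟨ℓ, h.2⟩) / C i)
            * (pc m n xt t π ℓ i * qs m n xt s t π i k) := by
  set a : Fin n := ⟨ℓ, h.2⟩ with ha
  -- pathwise decomposition
  have path : ∀ (R : Fin n → Option (Fin m)) (i : Fin m),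
      binWeight m n xt t π R * (if R a = some i then
          v i (π a) * (1 - Tl m n s π R ℓ i / C i) else 0)
        = (if R a = some i then binWeight m n xt t π R * v i (π a) else 0)
          - ∑ k ∈ Finset.range ℓ, (if R a = some i then
              (if hk : k < n then (if R ⟨k, hk⟩ = some i then
                binWeight m n xt t π R * (v i (π a) * s i (π ⟨k, hk⟩) / C i) else 0) else 0) else 0) := by
    intro R i
    by_cases hR : R a = some i
    · simp only [if_pos hR]
      have hT : ∑ k ∈ Finset.range ℓ, (if hk : k < n then (if R ⟨k, hk⟩ = some i then
            binWeight m n xt t π R * (v i (π a) * s i (π ⟨k, hk⟩) / C i) else 0) else 0)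
          = binWeight m n xt t π R * (v i (π a) / C i) * Tl m n s π R ℓ i := by
        unfold Tl
        rw [Finset.mul_sum]
        refine Finset.sum_congr rfl fun k _ => ?_
        by_cases hk : k < n
        · rw [dif_pos hk, dif_pos hk]
          by_cases hRk : R ⟨k, hk⟩ = some i
          · rw [if_pos hRk, if_pos hRk]; ring
          · rw [if_neg hRk, if_neg hRk, mul_zero]
        · rw [dif_neg hk, dif_neg hk, mul_zero]
      rw [hT]; ring
    · simp only [if_neg hR, mul_zero, Finset.sum_const_zero, sub_zero]
  calc ∑ R : Fin n → Option (Fin m), binWeight m n xt t π R * gain m n C s v t π R ℓ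
      = ∑ R : Fin n → Option (Fin m), ∑ i, binWeight m n xt t π R *
          (if R a = some i then v i (π a) * (1 - Tl m n s π R ℓ i / C i) else 0) := by
        refine Finset.sum_congr rfl fun R _ => ?_
        rw [gain_expand m n C s v t π R ℓ h, Finset.mul_sum]
    _ = ∑ i, ∑ R : Fin n → Option (Fin m),
          ((if R a = some i then binWeight m n xt t π R * v i (π a) else 0)
          - ∑ k ∈ Finset.range ℓ, (if R a = some i then
              (if hk : k < n then (if R ⟨k, hk⟩ = some i then
                binWeight m n xt t π R * (v i (π a) * s i (π ⟨k, hk⟩) / C i) else 0) else 0) else 0)) := by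
        rw [Finset.sum_comm]
        exact Finset.sum_congr rfl fun i _ => Finset.sum_congr rfl fun R _ => path R i
    _ = ∑ i, ((∑ R : Fin n → Option (Fin m),
            (if R a = some i then binWeight m n xt t π R * v i (π a) else 0))
          - ∑ k ∈ Finset.range ℓ, ∑ R : Fin n → Option (Fin m), (if R a = some i then
              (if hk : k < n then (if R ⟨k, hk⟩ = some i then
                binWeight m n xt t π R * (v i (π a) * s i (π ⟨k, hk⟩) / C i) else 0) else 0) else 0)) := by
        refine Finset.sum_congr rfl fun i _ => ?_
        rw [Finset.sum_sub_distrib, Finset.sum_comm]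
    _ = ∑ i, (pc m n xt t π ℓ i * v i (π a)
          - ∑ k ∈ Finset.range ℓ, (v i (π a) / C i) * (pc m n xt t π ℓ i * qs m n xt s t π i k)) := by
        refine Finset.sum_congr rfl fun i _ => ?_
        congr 1
        · exact cor1 m n xt t π a i (v i (π a))
        · refine Finset.sum_congr rfl fun k hk => ?_
          have hkℓ : k < ℓ := Finset.mem_range.mp hk
          have hkn : k < n := lt_trans hkℓ h.2
          have hne : a ≠ (⟨k, hkn⟩ : Fin n) := by
            intro hcontra
            have : ℓ = k := congrArg Fin.val hcontra
            omega
          have : ∀ R : Fin n → Option (Fin m), (if R a = some i then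
              (if hk' : k < n then (if R ⟨k, hk'⟩ = some i then
                binWeight m n xt t π R * (v i (π a) * s i (π ⟨k, hk'⟩) / C i) else 0) else 0) else 0)
              = (if R a = some i then (if R (⟨k, hkn⟩ : Fin n) = some i then
                binWeight m n xt t π R * (v i (π a) * s i (π ⟨k, hkn⟩) / C i) else 0) else 0) := by
            intro R; rw [dif_pos hkn]
          rw [Finset.sum_congr rfl (fun R _ => this R),
            cor2 m n xt t π a ⟨k, hkn⟩ hne i (v i (π a) * s i (π ⟨k, hkn⟩) / C i),
            qs_pc m n xt s t π i k hkn]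
          ring
    _ = (∑ i, pc m n xt t π ℓ i * v i (π a))
        - ∑ k ∈ Finset.range ℓ, ∑ i, (v i (π a) / C i)
            * (pc m n xt t π ℓ i * qs m n xt s t π i k) := by
        rw [Finset.sum_sub_distrib, Finset.sum_comm]

lemma card_filter_lt (n j : ℕ) (hj : j ≤ n) :
    (Finset.univ.filter (fun x : Fin n => (x : ℕ) < j)).card = j := by
  rw [Finset.card_filter, Fin.sum_univ_eq_sum_range (fun k => if k < j then 1 else 0),
    ← Finset.sum_filter]
  have : Finset.filter (fun k => k < j) (Finset.range n) = Finset.range j := by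
    ext x; simp [Finset.mem_filter, Finset.mem_range]; omega
  simp [this]

lemma filter_swap_image (n : ℕ) (j : ℕ) (r b : Fin n) (hr : (r : ℕ) < j) (hb : (b : ℕ) < j) :
    (Finset.univ.filter (fun x : Fin n => (x : ℕ) < j)).image (Equiv.swap r b)
      = Finset.univ.filter (fun x : Fin n => (x : ℕ) < j) := by
  have key : ∀ x : Fin n, ((Equiv.swap r b x : Fin n) : ℕ) < j ↔ (x : ℕ) < j := by
    intro x
    by_cases hxr : x = r
    · subst hxr; rw [Equiv.swap_apply_left]; exact ⟨fun _ => hr, fun _ => hb⟩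
    · by_cases hxb : x = b
      · subst hxb; rw [Equiv.swap_apply_right]; exact ⟨fun _ => hb, fun _ => hr⟩
      · rw [Equiv.swap_apply_of_ne_of_ne hxr hxb]
  ext x
  simp only [Finset.mem_image, Finset.mem_filter, Finset.mem_univ, true_and]
  constructor
  · rintro ⟨y, hy, rfl⟩; exact (key y).mpr hy
  · intro hx
    exact ⟨Equiv.swap r b x, (key x).mpr hx, Equiv.swap_apply_self r b x⟩

lemma QsetG_swap (n : ℕ) (π : Equiv.Perm (Fin n)) (r b : Fin n) (j : ℕ)
    (hr : (r : ℕ) < j) (hb : (b : ℕ) < j) :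
    QsetG n (π * Equiv.swap r b) j = QsetG n π j := by
  unfold QsetG
  have : (Finset.univ.filter (fun k : Fin n => (k : ℕ) < j)).image (⇑(π * Equiv.swap r b))
      = ((Finset.univ.filter (fun k : Fin n => (k : ℕ) < j)).image (Equiv.swap r b)).image π := by
    rw [Finset.image_image]; rfl
  rw [this, filter_swap_image n j r b hr hb]

lemma perm_avg (m n : ℕ) (k : ℕ) (hk : k < n) (A : Equiv.Perm (Fin n) → ℝ)
    (hA : ∀ (π : Equiv.Perm (Fin n)) (r : Fin n), (r : ℕ) ≤ k →
      A (π * Equiv.swap r ⟨k, hk⟩) = A π)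
    (g : Finset (Fin n) → Fin n → ℝ) :
    ((k : ℝ) + 1) * ∑ π : Equiv.Perm (Fin n), A π * g (QsetG n π (k + 1)) (π ⟨k, hk⟩)
      = ∑ π : Equiv.Perm (Fin n), A π * ∑ j ∈ QsetG n π (k + 1), g (QsetG n π (k + 1)) j := by
  have step : ∀ r : Fin n, (r : ℕ) ≤ k →
      (∑ π : Equiv.Perm (Fin n), A π * g (QsetG n π (k + 1)) (π ⟨k, hk⟩))
        = ∑ π : Equiv.Perm (Fin n), A π * g (QsetG n π (k + 1)) (π r) := by
    intro r hr
    have := Equiv.sum_comp (Equiv.mulRight (Equiv.swap r ⟨k, hk⟩))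
      (fun π : Equiv.Perm (Fin n) => A π * g (QsetG n π (k + 1)) (π r))
    rw [← this]
    refine Finset.sum_congr rfl fun π _ => ?_
    have h1 : A ((Equiv.mulRight (Equiv.swap r ⟨k, hk⟩)) π) = A π := hA π r hr
    have h2 : QsetG n ((Equiv.mulRight (Equiv.swap r ⟨k, hk⟩)) π) (k + 1) = QsetG n π (k + 1) :=
      QsetG_swap n π r ⟨k, hk⟩ (k + 1) (Nat.lt_succ_of_le hr) (Nat.lt_succ_self k)
    have h3 : ((Equiv.mulRight (Equiv.swap r ⟨k, hk⟩)) π) r = π ⟨k, hk⟩ := by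
      show (π * Equiv.swap r ⟨k, hk⟩) r = π ⟨k, hk⟩
      rw [Equiv.Perm.mul_apply, Equiv.swap_apply_left]
    rw [h1, h2, h3]
  have expand : ∀ π : Equiv.Perm (Fin n),
      (∑ j ∈ QsetG n π (k + 1), g (QsetG n π (k + 1)) j)
        = ∑ r ∈ Finset.univ.filter (fun x : Fin n => (x : ℕ) < k + 1),
            g (QsetG n π (k + 1)) (π r) := by
    intro π
    unfold QsetG
    rw [Finset.sum_image (fun x _ y _ hxy => π.injective hxy)]
  calc ((k : ℝ) + 1) * ∑ π : Equiv.Perm (Fin n), A π * g (QsetG n π (k + 1)) (π ⟨k, hk⟩)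
      = ∑ r ∈ Finset.univ.filter (fun x : Fin n => (x : ℕ) < k + 1),
          ∑ π : Equiv.Perm (Fin n), A π * g (QsetG n π (k + 1)) (π r) := by
        rw [Finset.sum_congr rfl (fun r hr => (step r (by
          have := (Finset.mem_filter.mp hr).2; omega)).symm)]
        rw [Finset.sum_const, card_filter_lt n (k + 1) hk, nsmul_eq_mul]
        push_cast; ring
    _ = ∑ π : Equiv.Perm (Fin n), ∑ r ∈ Finset.univ.filter (fun x : Fin n => (x : ℕ) < k + 1),
          A π * g (QsetG n π (k + 1)) (π r) := Finset.sum_comm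
    _ = ∑ π : Equiv.Perm (Fin n), A π * ∑ j ∈ QsetG n π (k + 1), g (QsetG n π (k + 1)) j := by
        refine Finset.sum_congr rfl fun π _ => ?_
        rw [expand π, Finset.mul_sum]

lemma fiber_count (n : ℕ) (j p : Fin n) :
    (Finset.univ.filter (fun π : Equiv.Perm (Fin n) => π p = j)).card * n = n.factorial := by
  have NA : ∀ p q : Fin n,
      (Finset.univ.filter (fun π : Equiv.Perm (Fin n) => π p = j)).card
        = (Finset.univ.filter (fun π : Equiv.Perm (Fin n) => π q = j)).card := by
    intro p q
    apply Finset.card_bij' (fun π _ => π * Equiv.swap p q) (fun π _ => π * Equiv.swap p q)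
    · intro π hπ
      simp only [Finset.mem_filter, Finset.mem_univ, true_and] at hπ ⊢
      rw [Equiv.Perm.mul_apply, Equiv.swap_apply_right, hπ]
    · intro π hπ
      simp only [Finset.mem_filter, Finset.mem_univ, true_and] at hπ ⊢
      rw [Equiv.Perm.mul_apply, Equiv.swap_apply_left, hπ]
    · intro π _; rw [mul_assoc, Equiv.swap_mul_self, mul_one]
    · intro π _; rw [mul_assoc, Equiv.swap_mul_self, mul_one]
  have NB : ∑ q : Fin n, (Finset.univ.filter (fun π : Equiv.Perm (Fin n) => π q = j)).card
      = n.factorial := by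
    have hfib := Finset.card_eq_sum_card_fiberwise
      (f := fun π : Equiv.Perm (Fin n) => π.symm j) (s := Finset.univ) (t := Finset.univ)
      (fun π _ => Finset.mem_univ _)
    rw [Finset.card_univ, Fintype.card_perm, Fintype.card_fin] at hfib
    rw [hfib]
    refine Finset.sum_congr rfl fun q _ => ?_
    congr 1
    ext π
    simp only [Finset.mem_filter, Finset.mem_univ, true_and]
    rw [Equiv.symm_apply_eq]
    exact eq_comm
  have : ∑ q : Fin n, (Finset.univ.filter (fun π : Equiv.Perm (Fin n) => π q = j)).card
      = n * (Finset.univ.filter (fun π : Equiv.Perm (Fin n) => π p = j)).card := by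
    rw [Finset.sum_congr rfl (fun q _ => (NA p q).symm), Finset.sum_const, Finset.card_univ,
      Fintype.card_fin, smul_eq_mul]
  rw [mul_comm, ← this, NB]

lemma mem_QsetG_iff (n : ℕ) (π : Equiv.Perm (Fin n)) (L : ℕ) (j : Fin n) :
    j ∈ QsetG n π L ↔ ((π.symm j : Fin n) : ℕ) < L := by
  unfold QsetG
  simp only [Finset.mem_image, Finset.mem_filter, Finset.mem_univ, true_and]
  constructor
  · rintro ⟨x, hx, rfl⟩; rwa [Equiv.symm_apply_apply]
  · intro hj; exact ⟨π.symm j, hj, Equiv.apply_symm_apply π j⟩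

lemma count_mem_Q (n L : ℕ) (hL : L ≤ n) (j : Fin n) :
    (Finset.univ.filter (fun π : Equiv.Perm (Fin n) => j ∈ QsetG n π L)).card * n
      = L * n.factorial := by
  have hfib := Finset.card_eq_sum_card_fiberwise
    (f := fun π : Equiv.Perm (Fin n) => π.symm j)
    (s := Finset.univ.filter (fun π : Equiv.Perm (Fin n) => j ∈ QsetG n π L))
    (t := Finset.univ.filter (fun p : Fin n => (p : ℕ) < L))
    (fun π hπ => by
      simp only [Finset.mem_coe, Finset.mem_filter, Finset.mem_univ, true_and] at hπ ⊢
      exact (mem_QsetG_iff n π L j).mp hπ)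
  rw [hfib, Finset.sum_mul]
  have step : ∀ p ∈ Finset.univ.filter (fun p : Fin n => (p : ℕ) < L),
      (Finset.filter (fun π : Equiv.Perm (Fin n) => π.symm j = p)
        (Finset.univ.filter (fun π : Equiv.Perm (Fin n) => j ∈ QsetG n π L))).card * n
        = n.factorial := by
    intro p hp
    have hpL : (p : ℕ) < L := (Finset.mem_filter.mp hp).2
    have heq : Finset.filter (fun π : Equiv.Perm (Fin n) => π.symm j = p)
        (Finset.univ.filter (fun π : Equiv.Perm (Fin n) => j ∈ QsetG n π L))
        = Finset.univ.filter (fun π : Equiv.Perm (Fin n) => π p = j) := by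
      ext π
      simp only [Finset.mem_filter, Finset.mem_univ, true_and, mem_QsetG_iff]
      constructor
      · rintro ⟨_, h2⟩; rw [← h2, Equiv.apply_symm_apply]
      · intro h
        have : π.symm j = p := by rw [← h, Equiv.symm_apply_apply]
        exact ⟨this ▸ hpL, this⟩
    rw [heq, fiber_count n j p]
  rw [Finset.sum_congr rfl step, Finset.sum_const, card_filter_lt n L hL, smul_eq_mul]

lemma sum_perm_B (m n : ℕ) (C : Fin m → ℝ) (s v : Fin m → Fin n → ℝ)
    (hv : ∀ i j, 0 < v i j) (hs0 : ∀ i j, 0 ≤ s i j)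
    (xt : Finset (Fin n) → Fin m → Fin n → ℝ)
    (hxt : ∀ Q : Finset (Fin n), gapFeasibleOn m n C s (xt Q) Q ∧
      (∀ y, gapFeasibleOn m n C s y Q → gapVal m n v y ≤ gapVal m n v (xt Q)))
    (xstar : Fin m → Fin n → ℝ) (hstar : gapFeasibleOn m n C s xstar Finset.univ)
    (t ℓ : ℕ) (h : t ≤ ℓ ∧ ℓ < n) :
    gapVal m n v xstar * (n.factorial : ℝ) / n
      ≤ ∑ π : Equiv.Perm (Fin n), ∑ i, pc m n xt t π ℓ i * v i (π ⟨ℓ, h.2⟩) := by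
  have hℓn : ℓ < n := h.2
  set g : Finset (Fin n) → Fin n → ℝ := fun Q j => ∑ i, xt Q i j * v i j with hg
  have hBg : ∀ π : Equiv.Perm (Fin n),
      (∑ i, pc m n xt t π ℓ i * v i (π ⟨ℓ, h.2⟩)) = g (QsetG n π (ℓ + 1)) (π ⟨ℓ, hℓn⟩) := by
    intro π
    refine Finset.sum_congr rfl fun i _ => ?_
    unfold pc
    rw [dif_pos ⟨h.2, h.1⟩]
  have havg := perm_avg m n ℓ hℓn (fun _ => 1) (fun π r hr => rfl) g
  simp only [one_mul] at havg
  -- rewrite the inner sum as gapVal of xt Q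
  have hQval : ∀ π : Equiv.Perm (Fin n),
      (∑ j ∈ QsetG n π (ℓ + 1), g (QsetG n π (ℓ + 1)) j)
        = gapVal m n v (xt (QsetG n π (ℓ + 1))) := by
    intro π
    set Q := QsetG n π (ℓ + 1)
    have hvanish : ∀ j ∈ Finset.univ, j ∉ Q → g Q j = 0 := by
      intro j _ hj
      exact Finset.sum_eq_zero fun i _ => by rw [(hxt Q).1.2.2.2 i j hj, zero_mul]
    rw [Finset.sum_subset (Finset.subset_univ Q) hvanish]
    unfold gapVal
    rw [Finset.sum_comm]
    exact Finset.sum_congr rfl fun j _ => Finset.sum_congr rfl fun i _ => mul_comm _ _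
  -- lower bound by the restriction of xstar
  have hrestr : ∀ π : Equiv.Perm (Fin n),
      gapVal m n v (fun i j => if j ∈ QsetG n π (ℓ + 1) then xstar i j else 0)
        ≤ gapVal m n v (xt (QsetG n π (ℓ + 1))) := by
    intro π
    set Q := QsetG n π (ℓ + 1)
    refine (hxt Q).2 _ ⟨fun i j => ?_, fun i => ?_, fun j => ?_, fun i j hj => by simp [hj]⟩
    · dsimp only
      by_cases hq : j ∈ Q
      · rw [if_pos hq]; exact hstar.1 i j
      · rw [if_neg hq]
    · dsimp only
      refine le_trans (Finset.sum_le_sum fun j _ => ?_) (hstar.2.1 i)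
      by_cases hq : j ∈ Q
      · rw [if_pos hq]
      · rw [if_neg hq, mul_zero]
        exact mul_nonneg (hs0 i j) (hstar.1 i j)
    · dsimp only
      by_cases hq : j ∈ Q
      · refine le_trans (le_of_eq (Finset.sum_congr rfl fun i _ => if_pos hq)) (hstar.2.2.1 j)
      · refine le_trans (le_of_eq (Finset.sum_congr rfl fun i _ => if_neg hq)) (by norm_num)
  -- counting identity
  have hn0 : (0:ℝ) < n := by
    have : 0 < n := lt_of_le_of_lt (Nat.zero_le ℓ) hℓn
    exact_mod_cast this
  have hcount : ∀ j : Fin n,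
      ∑ π : Equiv.Perm (Fin n), (if j ∈ QsetG n π (ℓ + 1) then (1:ℝ) else 0)
        = ((ℓ:ℝ) + 1) * (n.factorial : ℝ) / n := by
    intro j
    rw [Finset.sum_boole]
    have hnat := count_mem_Q n (ℓ + 1) (by omega) j
    have hreal : ((Finset.univ.filter
        (fun π : Equiv.Perm (Fin n) => j ∈ QsetG n π (ℓ + 1))).card : ℝ) * n
        = ((ℓ:ℝ) + 1) * (n.factorial : ℝ) := by
      exact_mod_cast congrArg (Nat.cast (R := ℝ)) hnat
    rw [eq_div_iff (ne_of_gt hn0)]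
    exact hreal
  have hresval : ∑ π : Equiv.Perm (Fin n),
      gapVal m n v (fun i j => if j ∈ QsetG n π (ℓ + 1) then xstar i j else 0)
      = ((ℓ:ℝ) + 1) * (n.factorial : ℝ) / n * gapVal m n v xstar := by
    unfold gapVal
    rw [Finset.sum_comm]
    have step1 : ∀ i : Fin m, ∑ π : Equiv.Perm (Fin n), ∑ j,
        v i j * (if j ∈ QsetG n π (ℓ + 1) then xstar i j else 0)
        = ∑ j, ((ℓ:ℝ) + 1) * (n.factorial : ℝ) / n * (v i j * xstar i j) := by
      intro i
      rw [Finset.sum_comm]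
      refine Finset.sum_congr rfl fun j _ => ?_
      have hterm : ∀ π : Equiv.Perm (Fin n),
          v i j * (if j ∈ QsetG n π (ℓ + 1) then xstar i j else 0)
            = (v i j * xstar i j) * (if j ∈ QsetG n π (ℓ + 1) then (1:ℝ) else 0) := by
        intro π; by_cases hq : j ∈ QsetG n π (ℓ + 1) <;> simp [hq]
      rw [Finset.sum_congr rfl (fun π _ => hterm π), ← Finset.mul_sum, hcount j]
      ring
    rw [Finset.sum_congr rfl (fun i _ => step1 i), Finset.mul_sum]
    exact Finset.sum_congr rfl fun i _ => (Finset.mul_sum _ _ _).symm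
  -- put everything together
  have key : ((ℓ:ℝ) + 1) * (gapVal m n v xstar * (n.factorial : ℝ) / n)
      ≤ ((ℓ:ℝ) + 1) * ∑ π : Equiv.Perm (Fin n), ∑ i, pc m n xt t π ℓ i * v i (π ⟨ℓ, h.2⟩) := by
    rw [Finset.sum_congr rfl (fun π _ => hBg π), havg]
    calc ((ℓ:ℝ) + 1) * (gapVal m n v xstar * (n.factorial : ℝ) / n)
        = ((ℓ:ℝ) + 1) * (n.factorial : ℝ) / n * gapVal m n v xstar := by ring
      _ = ∑ π : Equiv.Perm (Fin n),
            gapVal m n v (fun i j => if j ∈ QsetG n π (ℓ + 1) then xstar i j else 0) :=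
          hresval.symm
      _ ≤ ∑ π : Equiv.Perm (Fin n), gapVal m n v (xt (QsetG n π (ℓ + 1))) :=
          Finset.sum_le_sum fun π _ => hrestr π
      _ = ∑ π : Equiv.Perm (Fin n), ∑ j ∈ QsetG n π (ℓ + 1), g (QsetG n π (ℓ + 1)) j :=
          (Finset.sum_congr rfl fun π _ => (hQval π)).symm
  have hpos : (0:ℝ) < (ℓ:ℝ) + 1 := by positivity
  exact le_of_mul_le_mul_left key hpos

lemma pc_nonneg (m n : ℕ) (xt : Finset (Fin n) → Fin m → Fin n → ℝ)
    (hx0 : ∀ Q (i : Fin m) (j : Fin n), 0 ≤ xt Q i j) (t : ℕ)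
    (π : Equiv.Perm (Fin n)) (k : ℕ) (i : Fin m) : 0 ≤ pc m n xt t π k i := by
  unfold pc; split
  · exact hx0 _ _ _
  · exact le_rfl

lemma sum_perm_K (m n : ℕ) (C : Fin m → ℝ) (s v : Fin m → Fin n → ℝ)
    (hC : ∀ i, 0 < C i) (hs0 : ∀ i j, 0 ≤ s i j) (hv : ∀ i j, 0 < v i j)
    (xt : Finset (Fin n) → Fin m → Fin n → ℝ)
    (hxt : ∀ Q : Finset (Fin n), gapFeasibleOn m n C s (xt Q) Q ∧
      (∀ y, gapFeasibleOn m n C s y Q → gapVal m n v y ≤ gapVal m n v (xt Q)))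
    (t ℓ k : ℕ) (h : t ≤ ℓ ∧ ℓ < n) (hkℓ : k < ℓ) :
    ∑ π : Equiv.Perm (Fin n), ∑ i, (v i (π ⟨ℓ, h.2⟩) / C i)
        * (pc m n xt t π ℓ i * qs m n xt s t π i k)
      ≤ (1 / ((k:ℝ) + 1)) * ∑ π : Equiv.Perm (Fin n),
          ∑ i, pc m n xt t π ℓ i * v i (π ⟨ℓ, h.2⟩) := by
  have hkn : k < n := lt_trans hkℓ h.2
  have hx0 : ∀ Q (i : Fin m) (j : Fin n), 0 ≤ xt Q i j := fun Q i j => (hxt Q).1.1 i j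
  have hRHS0 : 0 ≤ ∑ π : Equiv.Perm (Fin n), ∑ i, pc m n xt t π ℓ i * v i (π ⟨ℓ, h.2⟩) :=
    Finset.sum_nonneg fun π _ => Finset.sum_nonneg fun i _ =>
      mul_nonneg (pc_nonneg m n xt hx0 t π ℓ i) (le_of_lt (hv _ _))
  by_cases htk : t ≤ k
  case neg =>
    have hqs0 : ∀ (π : Equiv.Perm (Fin n)) i, qs m n xt s t π i k = 0 := by
      intro π i; unfold qs; rw [dif_neg (fun hh => htk hh.2)]
    have : ∀ π : Equiv.Perm (Fin n), ∑ i, (v i (π ⟨ℓ, h.2⟩) / C i)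
        * (pc m n xt t π ℓ i * qs m n xt s t π i k) = 0 := fun π =>
      Finset.sum_eq_zero fun i _ => by rw [hqs0 π i, mul_zero, mul_zero]
    rw [Finset.sum_congr rfl fun π _ => this π, Finset.sum_const_zero]
    positivity
  case pos =>
    -- swap the sums and use perm_avg per bin i
    rw [Finset.sum_comm, Finset.sum_comm (f := fun π (i : Fin m) =>
      pc m n xt t π ℓ i * v i (π ⟨ℓ, h.2⟩)), Finset.mul_sum]
    refine Finset.sum_le_sum fun i _ => ?_
    set A : Equiv.Perm (Fin n) → ℝ :=
      fun π => (v i (π ⟨ℓ, h.2⟩) / C i) * pc m n xt t π ℓ i with hA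
    have hAinv : ∀ (π : Equiv.Perm (Fin n)) (r : Fin n), (r : ℕ) ≤ k →
        A (π * Equiv.swap r ⟨k, hkn⟩) = A π := by
      intro π r hr
      have hfix : (π * Equiv.swap r ⟨k, hkn⟩) ⟨ℓ, h.2⟩ = π ⟨ℓ, h.2⟩ := by
        rw [Equiv.Perm.mul_apply, Equiv.swap_apply_of_ne_of_ne]
        · exact Fin.ne_of_val_ne (by simp only [Fin.val_mk]; omega)
        · exact Fin.ne_of_val_ne (by simp only [Fin.val_mk]; omega)
      have hQ : QsetG n (π * Equiv.swap r ⟨k, hkn⟩) (ℓ + 1) = QsetG n π (ℓ + 1) :=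
        QsetG_swap n π r ⟨k, hkn⟩ (ℓ + 1) (by omega) (by simp only [Fin.val_mk]; omega)
      have hpc : pc m n xt t (π * Equiv.swap r ⟨k, hkn⟩) ℓ i = pc m n xt t π ℓ i := by
        unfold pc
        by_cases hcond : ℓ < n ∧ t ≤ ℓ
        · rw [dif_pos hcond, dif_pos hcond, hQ,
            show (π * Equiv.swap r ⟨k, hkn⟩) ⟨ℓ, hcond.1⟩ = π ⟨ℓ, hcond.1⟩ from hfix]
        · rw [dif_neg hcond, dif_neg hcond]
      show v i ((π * Equiv.swap r ⟨k, hkn⟩) ⟨ℓ, h.2⟩) / C i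
          * pc m n xt t (π * Equiv.swap r ⟨k, hkn⟩) ℓ i
          = v i (π ⟨ℓ, h.2⟩) / C i * pc m n xt t π ℓ i
      rw [hfix, hpc]
    have hApos : ∀ π : Equiv.Perm (Fin n), 0 ≤ A π := fun π =>
      mul_nonneg (div_nonneg (le_of_lt (hv _ _)) (le_of_lt (hC i)))
        (pc_nonneg m n xt hx0 t π ℓ i)
    set g : Finset (Fin n) → Fin n → ℝ := fun Q j => xt Q i j * s i j with hgdef
    have hqs : ∀ π : Equiv.Perm (Fin n),
        qs m n xt s t π i k = g (QsetG n π (k + 1)) (π ⟨k, hkn⟩) := by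
      intro π; unfold qs; rw [dif_pos ⟨hkn, htk⟩]
    have havg := perm_avg m n k hkn A hAinv g
    have hcapQ : ∀ π : Equiv.Perm (Fin n),
        (∑ j ∈ QsetG n π (k + 1), g (QsetG n π (k + 1)) j) ≤ C i := by
      intro π
      set Q := QsetG n π (k + 1)
      have h1 : (∑ j ∈ Q, g Q j) ≤ ∑ j, s i j * xt Q i j := by
        have : ∀ j ∈ Q, g Q j ≤ s i j * xt Q i j := fun j _ => le_of_eq (mul_comm _ _)
        refine le_trans (Finset.sum_le_sum this) ?_
        refine Finset.sum_le_sum_of_subset_of_nonneg (Finset.subset_univ Q) ?_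
        intro j _ _; exact mul_nonneg (hs0 i j) (hx0 Q i j)
      exact le_trans h1 ((hxt Q).1.2.1 i)
    have hmain : ((k:ℝ) + 1) * (∑ π : Equiv.Perm (Fin n), A π * qs m n xt s t π i k)
        ≤ ∑ π : Equiv.Perm (Fin n), A π * C i := by
      rw [Finset.sum_congr rfl fun π _ => by rw [hqs π], havg]
      exact Finset.sum_le_sum fun π _ =>
        mul_le_mul_of_nonneg_left (hcapQ π) (hApos π)
    have hACi : ∀ π : Equiv.Perm (Fin n),
        A π * C i = pc m n xt t π ℓ i * v i (π ⟨ℓ, h.2⟩) := by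
      intro π
      show v i (π ⟨ℓ, h.2⟩) / C i * pc m n xt t π ℓ i * C i
          = pc m n xt t π ℓ i * v i (π ⟨ℓ, h.2⟩)
      have hC0 : C i ≠ 0 := ne_of_gt (hC i)
      field_simp
    have hk1 : (0:ℝ) < (k:ℝ) + 1 := by positivity
    have htgt : ∀ π : Equiv.Perm (Fin n),
        (v i (π ⟨ℓ, h.2⟩) / C i) * (pc m n xt t π ℓ i * qs m n xt s t π i k)
          = A π * qs m n xt s t π i k := by
      intro π
      show v i (π ⟨ℓ, h.2⟩) / C i * (pc m n xt t π ℓ i * qs m n xt s t π i k)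
          = v i (π ⟨ℓ, h.2⟩) / C i * pc m n xt t π ℓ i * qs m n xt s t π i k
      ring
    rw [Finset.sum_congr rfl fun π _ => htgt π]
    have h3 : (∑ π : Equiv.Perm (Fin n), pc m n xt t π ℓ i * v i (π ⟨ℓ, h.2⟩))
        = ∑ π : Equiv.Perm (Fin n), A π * C i :=
      Finset.sum_congr rfl fun π _ => (hACi π).symm
    rw [h3]
    have hstep := mul_le_mul_of_nonneg_left hmain (le_of_lt (one_div_pos.mpr hk1))
    rwa [← mul_assoc, one_div_mul_cancel (ne_of_gt hk1), one_mul] at hstep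

lemma one_div_le_log (b : ℕ) (hb : 1 ≤ b) :
    (1:ℝ)/((b:ℝ)+1) ≤ Real.log ((b:ℝ)+1) - Real.log b := by
  have hb0 : (0:ℝ) < b := by exact_mod_cast hb
  have h := Real.log_le_sub_one_of_pos (show (0:ℝ) < (b:ℝ)/((b:ℝ)+1) by positivity)
  rw [Real.log_div (ne_of_gt hb0) (by positivity)] at h
  have heq : (b:ℝ)/((b:ℝ)+1) - 1 = -(1/((b:ℝ)+1)) := by field_simp; ring
  linarith

lemma sum_inv_le_log (a b : ℕ) (ha : 1 ≤ a) (hab : a ≤ b) :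
    ∑ k ∈ Finset.Ico a b, (1:ℝ)/((k:ℝ)+1) ≤ Real.log b - Real.log a := by
  induction b, hab using Nat.le_induction with
  | base => simp
  | succ b hab IH =>
      rw [Finset.sum_Ico_succ_top hab]
      have h1 := one_div_le_log b (le_trans ha hab)
      have hlogeq : Real.log ((b:ℝ)+1) = Real.log (((b+1:ℕ)):ℝ) := by push_cast; ring_nf
      linarith

lemma log_two_lt_one : Real.log 2 < 1 := by
  have := Real.log_two_lt_d9
  linarith

lemma coeff_nonneg (n ℓ : ℕ) (hℓ : n/2 ≤ ℓ) (hℓn : ℓ < n) :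
    0 ≤ 1 - ∑ k ∈ Finset.Ico (n/2) ℓ, (1:ℝ)/((k:ℝ)+1) := by
  set t := n/2 with ht
  by_cases ht1 : 1 ≤ t
  · have hS := sum_inv_le_log t ℓ ht1 hℓ
    have hmono : Real.log ℓ ≤ Real.log (2*t : ℕ) := by
      apply Real.log_le_log (by exact_mod_cast lt_of_lt_of_le (Nat.zero_lt_one) (le_trans ht1 hℓ))
      exact_mod_cast (by omega : ℓ ≤ 2*t)
    have htpos : (0:ℝ) < t := by exact_mod_cast Nat.lt_of_lt_of_le Nat.zero_lt_one ht1
    have hlog2t : Real.log (2*t : ℕ) = Real.log 2 + Real.log t := by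
      push_cast
      rw [Real.log_mul (by norm_num) (ne_of_gt htpos)]
    have := log_two_lt_one
    linarith
  · have ht0 : t = 0 := by omega
    have hℓ0 : ℓ = 0 := by omega
    subst hℓ0
    simp [ht0]

lemma harmonic_total (n : ℕ) (hn : 1 ≤ n) :
    (n:ℝ) * (1 - Real.log 2)
      ≤ ∑ ℓ ∈ Finset.Ico (n/2) n, (1 - ∑ k ∈ Finset.Ico (n/2) ℓ, (1:ℝ)/((k:ℝ)+1)) := by
  set t := n/2 with ht
  by_cases hn1 : n = 1
  · subst hn1
    have hlog2 : 0 < Real.log 2 := Real.log_pos (by norm_num)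
    norm_num [ht]
    linarith
  have hn2 : 2 ≤ n := by omega
  have ht1 : 1 ≤ t := by omega
  have htn : t ≤ n := by omega
  -- swap the double sum
  have hswap : ∑ ℓ ∈ Finset.Ico t n, ∑ k ∈ Finset.Ico t ℓ, (1:ℝ)/((k:ℝ)+1)
      = ∑ k ∈ Finset.Ico t n, ((n - (k+1) : ℕ) : ℝ) * ((1:ℝ)/((k:ℝ)+1)) := by
    have hsub : ∀ ℓ ∈ Finset.Ico t n, (∑ k ∈ Finset.Ico t ℓ, (1:ℝ)/((k:ℝ)+1))
        = ∑ k ∈ Finset.Ico t n, (if k < ℓ then (1:ℝ)/((k:ℝ)+1) else 0) := by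
      intro ℓ hℓ
      rw [Finset.mem_Ico] at hℓ
      have e1 : (∑ k ∈ Finset.Ico t ℓ, (1:ℝ)/((k:ℝ)+1))
          = ∑ k ∈ Finset.Ico t ℓ, (if k < ℓ then (1:ℝ)/((k:ℝ)+1) else 0) :=
        Finset.sum_congr rfl (fun k hk => (if_pos (Finset.mem_Ico.mp hk).2).symm)
      rw [e1]
      refine Finset.sum_subset (Finset.Ico_subset_Ico le_rfl (le_of_lt hℓ.2)) ?_
      intro k hk hk'
      rw [Finset.mem_Ico] at hk hk'
      rw [if_neg (by omega)]
    rw [Finset.sum_congr rfl hsub, Finset.sum_comm]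
    refine Finset.sum_congr rfl fun k hk => ?_
    rw [Finset.mem_Ico] at hk
    rw [← Finset.sum_filter]
    have hfil : Finset.filter (fun ℓ => k < ℓ) (Finset.Ico t n) = Finset.Ico (k+1) n := by
      ext x; simp only [Finset.mem_filter, Finset.mem_Ico]; omega
    rw [hfil, Finset.sum_const, Nat.card_Ico, nsmul_eq_mul]
  have hcard : (Finset.Ico t n).card = n - t := Nat.card_Ico t n
  -- compute the total
  have htotal : ∑ ℓ ∈ Finset.Ico t n, (1 - ∑ k ∈ Finset.Ico t ℓ, (1:ℝ)/((k:ℝ)+1))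
      = ((n - t : ℕ) : ℝ) - ∑ k ∈ Finset.Ico t n, ((n - (k+1) : ℕ) : ℝ) * ((1:ℝ)/((k:ℝ)+1)) := by
    rw [Finset.sum_sub_distrib, hswap, Finset.sum_const, hcard, nsmul_eq_mul, mul_one]
  rw [htotal]
  -- rewrite each term
  have hterm : ∀ k ∈ Finset.Ico t n, ((n - (k+1) : ℕ) : ℝ) * ((1:ℝ)/((k:ℝ)+1))
      = (n:ℝ) * ((1:ℝ)/((k:ℝ)+1)) - 1 := by
    intro k hk
    rw [Finset.mem_Ico] at hk
    have : ((n - (k+1) : ℕ) : ℝ) = (n:ℝ) - ((k:ℝ)+1) := by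
      have : k + 1 ≤ n := hk.2
      push_cast [Nat.cast_sub this]
      ring
    rw [this]
    have hk1 : ((k:ℝ)+1) ≠ 0 := by positivity
    field_simp
  rw [Finset.sum_congr rfl hterm, Finset.sum_sub_distrib, ← Finset.mul_sum,
    Finset.sum_const, hcard, nsmul_eq_mul, mul_one]
  set H := ∑ k ∈ Finset.Ico t n, (1:ℝ)/((k:ℝ)+1) with hH
  have hnt : ((n - t : ℕ) : ℝ) = (n:ℝ) - t := by
    push_cast [Nat.cast_sub htn]; ring
  rw [hnt]
  -- bound H
  have hd : n = 2*t ∨ n = 2*t + 1 := by omega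
  have hlogt : Real.log (2*t : ℕ) = Real.log 2 + Real.log t := by
    push_cast
    rw [Real.log_mul (by norm_num) (by
      have : (1:ℝ) ≤ t := by exact_mod_cast ht1
      linarith)]
  rcases hd with hd | hd
  · -- even
    have hHle : H ≤ Real.log 2 := by
      have := sum_inv_le_log t n ht1 htn
      rw [show ((n:ℕ):ℝ) = ((2*t : ℕ) : ℝ) by rw [hd]] at this
      rw [hlogt] at this
      linarith
    have hcast : (t:ℝ) = (n:ℝ)/2 := by
      have : (n:ℝ) = 2*t := by exact_mod_cast hd
      linarith
    have hn0 : (0:ℝ) ≤ n := Nat.cast_nonneg n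
    nlinarith
  · -- odd
    have hsplit : H = (∑ k ∈ Finset.Ico t (n-1), (1:ℝ)/((k:ℝ)+1)) + (1:ℝ)/((((n-1):ℕ):ℝ)+1) := by
      rw [hH, show n = (n-1) + 1 by omega]
      rw [Finset.sum_Ico_succ_top (by omega)]
      congr 2 <;> omega
    have hrest : (∑ k ∈ Finset.Ico t (n-1), (1:ℝ)/((k:ℝ)+1)) ≤ Real.log 2 := by
      have := sum_inv_le_log t (n-1) ht1 (by omega)
      rw [show ((n-1:ℕ):ℝ) = ((2*t : ℕ) : ℝ) by congr 1; omega] at this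
      rw [hlogt] at this
      linarith
    have hlast : (1:ℝ)/((((n-1):ℕ):ℝ)+1) = 1/(n:ℝ) := by
      congr 1
      push_cast [Nat.cast_sub (by omega : 1 ≤ n)]
      ring
    have hHle : H ≤ Real.log 2 + 1/(n:ℝ) := by
      rw [hsplit, hlast]; linarith
    have hcast : (t:ℝ) = ((n:ℝ)-1)/2 := by
      have : (n:ℝ) = 2*t + 1 := by exact_mod_cast hd
      linarith
    have hn0 : (0:ℝ) < n := by exact_mod_cast (by omega : 0 < n)
    have hmul := mul_le_mul_of_nonneg_left hHle (le_of_lt hn0)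
    rw [mul_add] at hmul
    have : (n:ℝ) * (1/(n:ℝ)) = 1 := by field_simp
    nlinarith

lemma gain_zero_of_neg (m n : ℕ) (C : Fin m → ℝ) (s v : Fin m → Fin n → ℝ) (t : ℕ)
    (π : Equiv.Perm (Fin n)) (R : Fin n → Option (Fin m)) (ℓ : ℕ)
    (h : ¬(t ≤ ℓ ∧ ℓ < n)) : gain m n C s v t π R ℓ = 0 := by
  unfold gain; rw [dif_neg h]

lemma gapVal_nonneg (m n : ℕ) (v x : Fin m → Fin n → ℝ) (hv : ∀ i j, 0 < v i j)
    (hx : ∀ i j, 0 ≤ x i j) : 0 ≤ gapVal m n v x :=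
  Finset.sum_nonneg fun i _ => Finset.sum_nonneg fun j _ =>
    mul_nonneg (le_of_lt (hv i j)) (hx i j)

lemma main_bound (m n : ℕ) (C : Fin m → ℝ) (hC : ∀ i, 0 < C i)
    (s v : Fin m → Fin n → ℝ)
    (hs : ∀ i j, 0 < s i j ∧ s i j ≤ C i) (hv : ∀ i j, 0 < v i j)
    (xt : Finset (Fin n) → Fin m → Fin n → ℝ)
    (hxt : ∀ Q : Finset (Fin n), gapFeasibleOn m n C s (xt Q) Q ∧
      (∀ y, gapFeasibleOn m n C s y Q → gapVal m n v y ≤ gapVal m n v (xt Q)))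
    (xstar : Fin m → Fin n → ℝ) (hstar : gapFeasibleOn m n C s xstar Finset.univ) :
    (n.factorial : ℝ) * ((1 - Real.log 2) * gapVal m n v xstar)
      ≤ ∑ π : Equiv.Perm (Fin n), ∑ R : Fin n → Option (Fin m),
          binWeight m n xt (n / 2) π R
            * (gapVal m n v ((fzAlg m n C s (n / 2) π R n).1)
                + gapVal m n v ((fzAlg m n C s (n / 2) π R n).2)) := by
  set t := n / 2 with htdef
  have hs0 : ∀ i j, 0 ≤ s i j := fun i j => le_of_lt (hs i j).1
  have hx0 : ∀ Q (i : Fin m) (j : Fin n), 0 ≤ xt Q i j := fun Q i j => (hxt Q).1.1 i j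
  have hx1 : ∀ Q (j : Fin n), ∑ i, xt Q i j ≤ 1 := fun Q j => (hxt Q).1.2.2.1 j
  have hOPT0 : 0 ≤ gapVal m n v xstar := gapVal_nonneg m n v xstar hv hstar.1
  by_cases hn : n = 0
  · subst hn
    have hval0 : ∀ (x : Fin m → Fin 0 → ℝ), gapVal m 0 v x = 0 := fun x => by
      unfold gapVal; simp
    simp only [hval0, add_zero, mul_zero, Finset.sum_const_zero]
    norm_num [hval0]
  have hn1 : 1 ≤ n := Nat.pos_of_ne_zero hn
  have hnR : (0:ℝ) < n := by exact_mod_cast hn1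
  -- step (a)+(b): per permutation
  have hstepA : ∀ π : Equiv.Perm (Fin n),
      ∑ ℓ ∈ Finset.range n, (∑ R : Fin n → Option (Fin m),
          binWeight m n xt t π R * gain m n C s v t π R ℓ)
        ≤ ∑ R : Fin n → Option (Fin m), binWeight m n xt t π R
            * (gapVal m n v ((fzAlg m n C s t π R n).1)
                + gapVal m n v ((fzAlg m n C s t π R n).2)) := by
    intro π
    rw [Finset.sum_comm]
    refine Finset.sum_le_sum fun R _ => ?_
    have hpath := (fz_inv m n C s v hC hs hv t π R n).2.2.2.2.2.2.2.2
    have hbw := binWeight_nonneg m n xt t π R hx0 hx1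
    calc ∑ ℓ ∈ Finset.range n, binWeight m n xt t π R * gain m n C s v t π R ℓ
        = binWeight m n xt t π R * ∑ ℓ ∈ Finset.range n, gain m n C s v t π R ℓ :=
          (Finset.mul_sum _ _ _).symm
      _ ≤ binWeight m n xt t π R * (gapVal m n v ((fzAlg m n C s t π R n).1)
            + gapVal m n v ((fzAlg m n C s t π R n).2)) :=
          mul_le_mul_of_nonneg_left hpath hbw
  -- per-round lower bound after summing over π
  have hround : ∀ ℓ, t ≤ ℓ → ℓ < n →
      (1 - ∑ k ∈ Finset.Ico t ℓ, (1:ℝ)/((k:ℝ)+1))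
          * (gapVal m n v xstar * (n.factorial : ℝ) / n)
        ≤ ∑ π : Equiv.Perm (Fin n), ∑ R : Fin n → Option (Fin m),
            binWeight m n xt t π R * gain m n C s v t π R ℓ := by
    intro ℓ hℓ1 hℓ2
    have h : t ≤ ℓ ∧ ℓ < n := ⟨hℓ1, hℓ2⟩
    rw [Finset.sum_congr rfl (fun π _ => exp_gain m n C s v xt t π ℓ h),
      Finset.sum_sub_distrib]
    set B := ∑ π : Equiv.Perm (Fin n), ∑ i, pc m n xt t π ℓ i * v i (π ⟨ℓ, h.2⟩) with hB
    have hBop : gapVal m n v xstar * (n.factorial : ℝ) / n ≤ B :=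
      sum_perm_B m n C s v hv hs0 xt hxt xstar hstar t ℓ h
    have hB0 : 0 ≤ B := le_trans (by positivity) hBop
    -- the subtracted part
    rw [Finset.sum_comm (f := fun (π : Equiv.Perm (Fin n)) (k : ℕ) =>
      ∑ i, (v i (π ⟨ℓ, h.2⟩) / C i) * (pc m n xt t π ℓ i * qs m n xt s t π i k))]
    have hsplit : Finset.range ℓ = Finset.Ico 0 t ∪ Finset.Ico t ℓ := by
      rw [Finset.range_eq_Ico, ← Finset.Ico_union_Ico_eq_Ico (Nat.zero_le t) hℓ1]
    have hKzero : ∀ k ∈ Finset.Ico 0 t,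
        (∑ π : Equiv.Perm (Fin n), ∑ i, (v i (π ⟨ℓ, h.2⟩) / C i)
          * (pc m n xt t π ℓ i * qs m n xt s t π i k)) = 0 := by
      intro k hk
      rw [Finset.mem_Ico] at hk
      refine Finset.sum_eq_zero fun π _ => Finset.sum_eq_zero fun i _ => ?_
      have : qs m n xt s t π i k = 0 := by
        unfold qs; rw [dif_neg (fun hh => absurd hh.2 (by omega))]
      rw [this, mul_zero, mul_zero]
    have hKbound : ∑ k ∈ Finset.range ℓ, (∑ π : Equiv.Perm (Fin n), ∑ i,
        (v i (π ⟨ℓ, h.2⟩) / C i) * (pc m n xt t π ℓ i * qs m n xt s t π i k))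
        ≤ (∑ k ∈ Finset.Ico t ℓ, (1:ℝ)/((k:ℝ)+1)) * B := by
      rw [hsplit, Finset.sum_union (by
        refine Finset.disjoint_left.mpr fun k hk1 hk2 => ?_
        rw [Finset.mem_Ico] at hk1 hk2
        omega)]
      rw [Finset.sum_congr rfl hKzero, Finset.sum_const_zero, zero_add, Finset.sum_mul]
      refine Finset.sum_le_sum fun k hk => ?_
      rw [Finset.mem_Ico] at hk
      have := sum_perm_K m n C s v hC hs0 hv xt hxt t ℓ k h hk.2
      calc ∑ π : Equiv.Perm (Fin n), ∑ i, (v i (π ⟨ℓ, h.2⟩) / C i)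
            * (pc m n xt t π ℓ i * qs m n xt s t π i k)
          ≤ (1 / ((k:ℝ) + 1)) * B := this
        _ = (1:ℝ)/((k:ℝ)+1) * B := by ring
    have hcoef := coeff_nonneg n ℓ hℓ1 hℓ2
    calc (1 - ∑ k ∈ Finset.Ico t ℓ, (1:ℝ)/((k:ℝ)+1))
          * (gapVal m n v xstar * (n.factorial : ℝ) / n)
        ≤ (1 - ∑ k ∈ Finset.Ico t ℓ, (1:ℝ)/((k:ℝ)+1)) * B :=
          mul_le_mul_of_nonneg_left hBop hcoef
      _ = B - (∑ k ∈ Finset.Ico t ℓ, (1:ℝ)/((k:ℝ)+1)) * B := by ring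
      _ ≤ B - ∑ k ∈ Finset.range ℓ, (∑ π : Equiv.Perm (Fin n), ∑ i,
            (v i (π ⟨ℓ, h.2⟩) / C i) * (pc m n xt t π ℓ i * qs m n xt s t π i k)) := by
          linarith [hKbound]
  -- rounds before the sample contribute zero
  have hzero : ∀ ℓ, ¬(t ≤ ℓ ∧ ℓ < n) →
      (∑ π : Equiv.Perm (Fin n), ∑ R : Fin n → Option (Fin m),
          binWeight m n xt t π R * gain m n C s v t π R ℓ) = 0 := by
    intro ℓ hneg
    refine Finset.sum_eq_zero fun π _ => Finset.sum_eq_zero fun R _ => ?_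
    rw [gain_zero_of_neg m n C s v t π R ℓ hneg, mul_zero]
  -- combine over all rounds
  calc (n.factorial : ℝ) * ((1 - Real.log 2) * gapVal m n v xstar)
      = ((n:ℝ) * (1 - Real.log 2)) * (gapVal m n v xstar * (n.factorial : ℝ) / n) := by
        field_simp
    _ ≤ (∑ ℓ ∈ Finset.Ico t n, (1 - ∑ k ∈ Finset.Ico t ℓ, (1:ℝ)/((k:ℝ)+1)))
          * (gapVal m n v xstar * (n.factorial : ℝ) / n) := by
        refine mul_le_mul_of_nonneg_right (harmonic_total n hn1) (by positivity)
    _ = ∑ ℓ ∈ Finset.Ico t n, (1 - ∑ k ∈ Finset.Ico t ℓ, (1:ℝ)/((k:ℝ)+1))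
          * (gapVal m n v xstar * (n.factorial : ℝ) / n) := Finset.sum_mul _ _ _
    _ ≤ ∑ ℓ ∈ Finset.Ico t n, ∑ π : Equiv.Perm (Fin n), ∑ R : Fin n → Option (Fin m),
          binWeight m n xt t π R * gain m n C s v t π R ℓ := by
        refine Finset.sum_le_sum fun ℓ hℓ => ?_
        rw [Finset.mem_Ico] at hℓ
        exact hround ℓ hℓ.1 hℓ.2
    _ = ∑ ℓ ∈ Finset.range n, ∑ π : Equiv.Perm (Fin n), ∑ R : Fin n → Option (Fin m),
          binWeight m n xt t π R * gain m n C s v t π R ℓ := by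
        rw [Finset.range_eq_Ico, ← Finset.Ico_union_Ico_eq_Ico (Nat.zero_le t) (by omega : t ≤ n),
          Finset.sum_union (by
            refine Finset.disjoint_left.mpr fun k hk1 hk2 => ?_
            rw [Finset.mem_Ico] at hk1 hk2
            omega)]
        have : ∀ ℓ ∈ Finset.Ico 0 t, (∑ π : Equiv.Perm (Fin n), ∑ R : Fin n → Option (Fin m),
            binWeight m n xt t π R * gain m n C s v t π R ℓ) = 0 := by
          intro ℓ hℓ
          rw [Finset.mem_Ico] at hℓ
          exact hzero ℓ (fun hh => absurd hh.1 (by omega))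
        rw [Finset.sum_congr rfl this, Finset.sum_const_zero, zero_add]
    _ = ∑ π : Equiv.Perm (Fin n), ∑ ℓ ∈ Finset.range n, ∑ R : Fin n → Option (Fin m),
          binWeight m n xt t π R * gain m n C s v t π R ℓ := Finset.sum_comm
    _ ≤ ∑ π : Equiv.Perm (Fin n), ∑ R : Fin n → Option (Fin m),
          binWeight m n xt t π R
            * (gapVal m n v ((fzAlg m n C s t π R n).1)
                + gapVal m n v ((fzAlg m n C s t π R n).2)) := by
        refine Finset.sum_le_sum fun π _ => ?_
        have := hstepA π
        calc ∑ ℓ ∈ Finset.range n, ∑ R : Fin n → Option (Fin m),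
              binWeight m n xt t π R * gain m n C s v t π R ℓ
            = ∑ ℓ ∈ Finset.range n, (∑ R : Fin n → Option (Fin m),
              binWeight m n xt t π R * gain m n C s v t π R ℓ) := rfl
          _ ≤ _ := hstepA π

end GapAux

/-- Let `y` and `z` be the outputs of `FeasibleGAP` and
`ImitativeGAP` with sample size `t = ⌊n/2⌋`, with `π` uniformly random and,
conditionally on `π`, independent bin choices distributed according to the optimal
fractional assignments. Then `(1/2)·E[v(y) + v(z)] ≥ ((1 − ln 2)/2) · v(x*)`;
moreover, on every realization, `y` and `z` are feasible integral assignments, so the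
algorithm `RandomGAP` (which runs `FeasibleGAP` with probability `1/2` and
`ImitativeGAP` with probability `1/2`) always outputs a feasible assignment of
expected value at least `((1 − ln 2)/2) · v(x*) ≈ v(x*)/6.52`. -/
theorem gap_randomgap_competitive
    (m n : ℕ) (C : Fin m → ℝ) (hC : ∀ i, 0 < C i)
    (s v : Fin m → Fin n → ℝ)
    (hs : ∀ i j, 0 < s i j ∧ s i j ≤ C i) (hv : ∀ i j, 0 < v i j)
    (xt : Finset (Fin n) → Fin m → Fin n → ℝ)
    (hxt : ∀ Q : Finset (Fin n), gapFeasibleOn m n C s (xt Q) Q ∧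
      (∀ y, gapFeasibleOn m n C s y Q → gapVal m n v y ≤ gapVal m n v (xt Q)))
    (xstar : Fin m → Fin n → ℝ)
    (hstar : gapFeasibleOn m n C s xstar Finset.univ ∧ gapIntegral m n xstar ∧
      (∀ y, gapFeasibleOn m n C s y Finset.univ → gapIntegral m n y →
        gapVal m n v y ≤ gapVal m n v xstar)) :
    ((1 / 2 : ℝ) * ((∑ π : Equiv.Perm (Fin n), ∑ R : Fin n → Option (Fin m),
        binWeight m n xt (n / 2) π R
          * (gapVal m n v ((fzAlg m n C s (n / 2) π R n).1)
              + gapVal m n v ((fzAlg m n C s (n / 2) π R n).2))) / (n.factorial : ℝ))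
      ≥ ((1 - Real.log 2) / 2) * gapVal m n v xstar) ∧
    (∀ (π : Equiv.Perm (Fin n)) (R : Fin n → Option (Fin m)),
      gapFeasibleOn m n C s ((fzAlg m n C s (n / 2) π R n).1) Finset.univ ∧
      gapIntegral m n ((fzAlg m n C s (n / 2) π R n).1) ∧
      gapFeasibleOn m n C s ((fzAlg m n C s (n / 2) π R n).2) Finset.univ ∧
      gapIntegral m n ((fzAlg m n C s (n / 2) π R n).2)) := by
  constructor
  · have hmb := GapAux.main_bound m n C hC s v hs hv xt hxt xstar hstar.1
    have hfact : (0:ℝ) < (n.factorial : ℝ) := by exact_mod_cast n.factorial_pos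
    set S := ∑ π : Equiv.Perm (Fin n), ∑ R : Fin n → Option (Fin m),
        binWeight m n xt (n / 2) π R
          * (gapVal m n v ((fzAlg m n C s (n / 2) π R n).1)
              + gapVal m n v ((fzAlg m n C s (n / 2) π R n).2)) with hSdef
    have hdiv : (1 - Real.log 2) * gapVal m n v xstar ≤ S / (n.factorial : ℝ) := by
      rw [le_div_iff₀ hfact]
      calc (1 - Real.log 2) * gapVal m n v xstar * (n.factorial : ℝ)
          = (n.factorial : ℝ) * ((1 - Real.log 2) * gapVal m n v xstar) := by ring
        _ ≤ S := hmb
    rw [ge_iff_le]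
    linarith
  · intro π R
    exact GapAux.fz_final m n C s v hC hs hv (n / 2) π R n
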